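/- arXiv:1701.00129 — 6 statements merged into one kernel-verified Lean document; each statement's English description precedes it below -/
import Mathlib

section
/- For every γ ∈ (-1, -1/2) and all real numbers s₁ ≠ s₂, one has ∫_ℝ (s₁ - u)₊^γ (s₂ - u)₊^γ du = B(γ+1, -2γ-1) · |s₂ - s₁|^{2γ+1}. -/
open MeasureTheory

/-- `(x)₊^γ`: `x ^ γ` if `x > 0`, and `0` otherwise. -/
noncomputable def pospow (x γ : ℝ) : ℝ := if 0 < x then x ^ γ else 0

/-- The Euler Beta function. -/
noncomputable def eulerBeta (p q : ℝ) : ℝ := ∫ x in (0:ℝ)..1, x ^ (p - 1) * (1 - x) ^ (q - 1)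

lemma pospow_mul_pos {t : ℝ} (ht : 0 < t) (x γ : ℝ) :
    pospow (t * x) γ = t ^ γ * pospow x γ := by
  unfold pospow
  by_cases hx : 0 < x
  · rw [if_pos (mul_pos ht hx), if_pos hx, Real.mul_rpow ht.le hx.le]
  · rw [if_neg (fun h => hx (by nlinarith)), if_neg hx, mul_zero]

lemma eulerBeta_eq_Ioi (γ : ℝ) :
    eulerBeta (γ + 1) (-2 * γ - 1)
      = ∫ x in Set.Ioi (0:ℝ), x ^ γ * (1 + x) ^ γ := by
  have himg : (fun y : ℝ => y / (1 - y)) '' Set.Ioo 0 1 = Set.Ioi 0 := by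
    ext x
    constructor
    · rintro ⟨y, ⟨hy0, hy1⟩, rfl⟩
      exact div_pos hy0 (by linarith)
    · intro hx
      have hx' : (0:ℝ) < x := hx
      refine ⟨x / (1 + x), ⟨div_pos hx' (by linarith), ?_⟩, ?_⟩
      · rw [div_lt_one (by linarith)]; linarith
      · have h1 : (1:ℝ) + x ≠ 0 := by positivity
        field_simp; ring
  have hderiv : ∀ y ∈ Set.Ioo (0:ℝ) 1,
      HasDerivWithinAt (fun y : ℝ => y / (1 - y)) ((1 - y) ^ (-2 : ℝ)) (Set.Ioo 0 1) y := by
    intro y hy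
    obtain ⟨hy0, hy1⟩ := hy
    have h1 : (1:ℝ) - y ≠ 0 := by linarith
    have h1' : (0:ℝ) < 1 - y := by linarith
    have h := (hasDerivAt_id y).div ((hasDerivAt_const y (1:ℝ)).sub (hasDerivAt_id y)) h1
    have heq : (1 * (1 - y) - y * (0 - 1)) / (1 - y) ^ 2 = (1 - y) ^ (-2 : ℝ) := by
      rw [Real.rpow_neg h1'.le, ← Real.rpow_two]
      field_simp; ring
    simp only [id_eq, Pi.sub_apply] at h
    rw [heq] at h
    exact h.hasDerivWithinAt
  have hinj : Set.InjOn (fun y : ℝ => y / (1 - y)) (Set.Ioo 0 1) := by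
    intro a ha b hb h
    obtain ⟨ha0, ha1⟩ := ha
    obtain ⟨hb0, hb1⟩ := hb
    have h1 : (1:ℝ) - a ≠ 0 := by linarith
    have h2 : (1:ℝ) - b ≠ 0 := by linarith
    field_simp at h
    linarith
  rw [← himg, MeasureTheory.integral_image_eq_integral_abs_deriv_smul measurableSet_Ioo
    hderiv hinj]
  rw [eulerBeta, intervalIntegral.integral_of_le zero_le_one,
    MeasureTheory.integral_Ioc_eq_integral_Ioo]
  apply setIntegral_congr_fun measurableSet_Ioo
  intro y hy
  obtain ⟨hy0, hy1⟩ := hy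
  have h1 : (0:ℝ) < 1 - y := by linarith
  have hiy : 1 + y / (1 - y) = (1 - y)⁻¹ := by field_simp; ring
  show y ^ (γ + 1 - 1) * (1 - y) ^ (-2 * γ - 1 - 1)
      = |(1 - y) ^ (-2:ℝ)| • ((y / (1 - y)) ^ γ * (1 + y / (1 - y)) ^ γ)
  rw [smul_eq_mul, abs_of_nonneg (Real.rpow_nonneg h1.le _), hiy,
    Real.div_rpow hy0.le h1.le, ← Real.rpow_neg_one (1 - y), ← Real.rpow_mul h1.le,
    div_eq_mul_inv, ← Real.rpow_neg h1.le γ, mul_comm ((1 - y) ^ (-2:ℝ)), mul_assoc,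
    mul_assoc, ← Real.rpow_add h1, ← Real.rpow_add h1]
  rw [show γ + 1 - 1 = γ by ring, show -2 * γ - 1 - 1 = -γ + (-1 * γ + -2) by ring]

lemma integral_pospow_lt {γ a b : ℝ} (hab : a < b) :
    ∫ u : ℝ, pospow (a - u) γ * pospow (b - u) γ
      = eulerBeta (γ + 1) (-2 * γ - 1) * (b - a) ^ (2 * γ + 1) := by
  set t := b - a with ht'
  have ht : 0 < t := by simp [ht']; linarith
  set F : ℝ → ℝ := fun u => pospow (a - u) γ * pospow (b - u) γ with hF
  have key : ∀ x : ℝ, F (a - t * x) = t ^ (2 * γ) * (pospow x γ * pospow (1 + x) γ) := by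
    intro x
    have h1 : a - (a - t * x) = t * x := by ring
    have h2 : b - (a - t * x) = t * (1 + x) := by rw [ht']; ring
    rw [hF]
    simp only [h1, h2, pospow_mul_pos ht]
    rw [show (2:ℝ) * γ = γ + γ by ring, Real.rpow_add ht]
    ring
  have step1 : ∫ z : ℝ, F (a - z) = ∫ u : ℝ, F u :=
    integral_sub_left_eq_self F volume a
  have step2 : (∫ x : ℝ, F (a - t * x)) = |t⁻¹| • ∫ z : ℝ, F (a - z) := by
    exact Measure.integral_comp_mul_left (fun z => F (a - z)) t
  have step3 : (∫ x : ℝ, F (a - t * x))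
      = t ^ (2 * γ) * ∫ x : ℝ, pospow x γ * pospow (1 + x) γ := by
    simp_rw [key]
    exact integral_const_mul _ _
  have step4 : (∫ x : ℝ, pospow x γ * pospow (1 + x) γ)
      = ∫ x in Set.Ioi (0:ℝ), x ^ γ * (1 + x) ^ γ := by
    rw [← setIntegral_eq_integral_of_forall_compl_eq_zero
      (s := Set.Ioi (0:ℝ)) (fun x hx => ?_)]
    · apply setIntegral_congr_fun measurableSet_Ioi
      intro x hx
      have hx' : (0:ℝ) < x := hx
      simp only [pospow, if_pos hx', if_pos (by linarith : (0:ℝ) < 1 + x)]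
    · have hx' : ¬ (0:ℝ) < x := hx
      simp only [pospow, if_neg hx', zero_mul]
  have htne : t ≠ 0 := ht.ne'
  have : ∫ u : ℝ, F u = t * ∫ x : ℝ, F (a - t * x) := by
    rw [step2, ← step1, smul_eq_mul, abs_of_pos (inv_pos.mpr ht)]
    field_simp
  rw [show (∫ u : ℝ, pospow (a - u) γ * pospow (b - u) γ) = ∫ u : ℝ, F u from rfl, this,
    step3, step4, ← eulerBeta_eq_Ioi, show (2:ℝ) * γ + 1 = 1 + 2 * γ by ring,
    Real.rpow_add ht, Real.rpow_one]
  ring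

theorem integral_pospow_mul_pospow (γ : ℝ) (hγ : γ ∈ Set.Ioo (-1 : ℝ) (-(1/2)))
    (s₁ s₂ : ℝ) (hs : s₁ ≠ s₂) :
    ∫ u : ℝ, pospow (s₁ - u) γ * pospow (s₂ - u) γ
      = eulerBeta (γ + 1) (-2 * γ - 1) * |s₂ - s₁| ^ (2 * γ + 1) := by
  rcases hs.lt_or_gt with h | h
  · rw [integral_pospow_lt h, abs_of_pos (by linarith : (0:ℝ) < s₂ - s₁)]
  · rw [show (∫ u : ℝ, pospow (s₁ - u) γ * pospow (s₂ - u) γ)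
        = ∫ u : ℝ, pospow (s₂ - u) γ * pospow (s₁ - u) γ from by
      congr 1; ext u; ring,
      integral_pospow_lt h, abs_sub_comm, abs_of_pos (by linarith : (0:ℝ) < s₁ - s₂)]
end

section
/- Let H ∈ (1/2, 1). Set C_H = max_{u ∈ [0,1/2]} ((1-u)^{2H-2} - (1+u)^{2H-2}). Then for all real numbers t₁ > t₂ and every ε with 0 < ε < (t₁ - t₂)/2, one has |(1/ε²) ∫_{t₁}^{t₁+ε} ∫_{t₂}^{t₂+ε} (|s-r|^{2H-2} - |s-t₂|^{2H-2} - |t₁-r|^{2H-2} + |t₁-t₂|^{2H-2}) dr ds| ≤ (t₁-t₂-ε)^{2H-2} - (t₁-t₂+ε)^{2H-2} ≤ C_H · (t₁-t₂)^{2H-2}. -/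
open MeasureTheory

lemma convexOn_rpow_neg {p : ℝ} (hp : p ≤ 0) :
    ConvexOn ℝ (Set.Ioi (0:ℝ)) fun x : ℝ => x ^ p := by
  refine ⟨convex_Ioi 0, fun x hx y hy a b ha hb hab => ?_⟩
  simp only [smul_eq_mul]
  have hx0 : (0:ℝ) < x := hx
  have hy0 : (0:ℝ) < y := hy
  have hs : 0 < a * x + b * y := by
    have h1 : a * min x y ≤ a * x := mul_le_mul_of_nonneg_left (min_le_left x y) ha
    have h2 : b * min x y ≤ b * y := mul_le_mul_of_nonneg_left (min_le_right x y) hb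
    nlinarith [lt_min hx0 hy0]
  have hlog : a * Real.log x + b * Real.log y ≤ Real.log (a * x + b * y) := by
    have := strictConcaveOn_log_Ioi.concaveOn.2 (Set.mem_Ioi.2 hx0) (Set.mem_Ioi.2 hy0) ha hb hab
    simpa using this
  calc (a * x + b * y) ^ p = Real.exp (Real.log (a * x + b * y) * p) :=
        Real.rpow_def_of_pos hs p
    _ ≤ Real.exp ((a * Real.log x + b * Real.log y) * p) :=
        Real.exp_le_exp.2 (mul_le_mul_of_nonpos_right hlog hp)
    _ = Real.exp (a * (Real.log x * p) + b * (Real.log y * p)) := by ring_nf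
    _ ≤ a * Real.exp (Real.log x * p) + b * Real.exp (Real.log y * p) := by
        have := convexOn_exp.2 (Set.mem_univ (Real.log x * p)) (Set.mem_univ (Real.log y * p))
          ha hb hab
        simpa using this
    _ = a * x ^ p + b * y ^ p := by
        rw [← Real.rpow_def_of_pos hx0, ← Real.rpow_def_of_pos hy0]

lemma rpow_sub_rpow_le {p a b k : ℝ} (hp : p ≤ 0) (hak : 0 < a - k) (hk : 0 ≤ k) (hab : a ≤ b) :
    a ^ p - (a - k) ^ p ≤ b ^ p - (b - k) ^ p := by
  rcases eq_or_lt_of_le hk with h | hk'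
  · simp [← h]
  rcases eq_or_lt_of_le hab with h | hab'
  · rw [h]
  have hf := convexOn_rpow_neg hp
  have ha0 : 0 < a := by linarith
  have hb0 : 0 < b := by linarith
  have hbk : 0 < b - k := by linarith
  set f : ℝ → ℝ := fun x => x ^ p with hfdef
  have h1 := hf.secant_mono (Set.mem_Ioi.2 hak) (Set.mem_Ioi.2 ha0) (Set.mem_Ioi.2 hb0)
    (by intro h; linarith : a ≠ a - k)
    (by intro h; linarith : b ≠ a - k) hab
  have h2 := hf.secant_mono (Set.mem_Ioi.2 hb0) (Set.mem_Ioi.2 hak) (Set.mem_Ioi.2 hbk)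
    (by intro h; linarith : a - k ≠ b)
    (by intro h; linarith : b - k ≠ b)
    (by linarith : a - k ≤ b - k)
  have e0 : (f a - f (a - k)) / (a - (a - k)) = (f a - f (a - k)) / k := by
    rw [show a - (a - k) = k by ring]
  have e1 : (f (a - k) - f b) / (a - k - b) = (f b - f (a - k)) / (b - (a - k)) := by
    rw [div_eq_div_iff (by linarith) (by linarith)]; ring
  have e2 : (f (b - k) - f b) / (b - k - b) = (f b - f (b - k)) / k := by
    rw [div_eq_div_iff (by linarith) (by linarith)]; ring
  rw [e1] at h2
  rw [e0] at h1
  rw [e2] at h2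
  have := (div_le_div_iff_of_pos_right hk').mp (h1.trans h2)
  simpa [hfdef] using this

lemma pt_bound {p x y h ε : ℝ} (hp : p ≤ 0) (hyx : y ≤ x) (hxy : x ≤ y + ε)
    (hh0 : 0 ≤ h) (hhε : h ≤ ε) (hpos : 0 < y - ε) :
    |(x - h) ^ p - x ^ p - (y - h) ^ p + y ^ p| ≤ (y - ε) ^ p - (y + ε) ^ p := by
  have hyh : 0 < y - h := by linarith
  have hxh : 0 < x - h := by linarith
  have hy0 : 0 < y := by linarith
  have C : (y + ε) ^ p ≤ y ^ p := Real.rpow_le_rpow_of_nonpos hy0 (by linarith) hp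
  have C2 : (y + ε) ^ p ≤ (y - ε) ^ p := Real.rpow_le_rpow_of_nonpos hpos (by linarith) hp
  rw [abs_le]
  constructor
  · -- lower bound : -(M) ≤ f, i.e. -f ≤ M
    have A : x ^ p - (x - h) ^ p ≤ (y + ε) ^ p - (y + ε - h) ^ p :=
      rpow_sub_rpow_le hp hxh hh0 hxy
    have B : (y - h) ^ p - (y - h - (ε - h)) ^ p
        ≤ (y + ε - h) ^ p - (y + ε - h - (ε - h)) ^ p :=
      rpow_sub_rpow_le hp (by linarith) (by linarith) (by linarith)
    rw [show y - h - (ε - h) = y - ε by ring, show y + ε - h - (ε - h) = y by ring] at B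
    linarith
  · -- upper: f ≤ 0 ≤ M
    have F : y ^ p - (y - h) ^ p ≤ x ^ p - (x - h) ^ p :=
      rpow_sub_rpow_le hp hyh hh0 hyx
    linarith

theorem increment_rectangle_bound (H : ℝ) (hH : H ∈ Set.Ioo (1/2 : ℝ) 1)
    (t₁ t₂ : ℝ) (h12 : t₂ < t₁) (ε : ℝ) (hε : 0 < ε) (hε' : ε < (t₁ - t₂) / 2) :
    |(1 / ε ^ 2) * ∫ s in t₁..(t₁ + ε), ∫ r in t₂..(t₂ + ε),
        (|s - r| ^ (2 * H - 2) - |s - t₂| ^ (2 * H - 2)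
          - |t₁ - r| ^ (2 * H - 2) + |t₁ - t₂| ^ (2 * H - 2))|
      ≤ (t₁ - t₂ - ε) ^ (2 * H - 2) - (t₁ - t₂ + ε) ^ (2 * H - 2) ∧
    (t₁ - t₂ - ε) ^ (2 * H - 2) - (t₁ - t₂ + ε) ^ (2 * H - 2)
      ≤ (sSup ((fun u => (1 - u) ^ (2 * H - 2) - (1 + u) ^ (2 * H - 2)) '' Set.Icc (0:ℝ) (1/2)))
          * (t₁ - t₂) ^ (2 * H - 2) := by
  obtain ⟨hH1, hH2⟩ := hH
  set p := 2 * H - 2 with hpdef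
  have hp : p ≤ 0 := by simp only [hpdef]; linarith
  have hD : 0 < t₁ - t₂ := by linarith
  have hDε : 0 < t₁ - t₂ - ε := by linarith
  set M := (t₁ - t₂ - ε) ^ p - (t₁ - t₂ + ε) ^ p with hMdef
  constructor
  · -- Part 1
    have key : ∀ s ∈ Set.uIoc t₁ (t₁ + ε),
        ‖∫ r in t₂..(t₂ + ε), (|s - r| ^ p - |s - t₂| ^ p - |t₁ - r| ^ p + |t₁ - t₂| ^ p)‖
          ≤ M * ε := by
      intro s hs
      rw [Set.uIoc_of_le (by linarith)] at hs
      obtain ⟨hs1, hs2⟩ := hs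
      have inner : ∀ r ∈ Set.uIoc t₂ (t₂ + ε),
          ‖|s - r| ^ p - |s - t₂| ^ p - |t₁ - r| ^ p + |t₁ - t₂| ^ p‖ ≤ M := by
        intro r hr
        rw [Set.uIoc_of_le (by linarith)] at hr
        obtain ⟨hr1, hr2⟩ := hr
        have hsr : 0 < s - r := by linarith
        have hst : 0 < s - t₂ := by linarith
        have htr : 0 < t₁ - r := by linarith
        rw [Real.norm_eq_abs, abs_of_pos hsr, abs_of_pos hst, abs_of_pos htr,
          abs_of_pos hD, show s - r = (s - t₂) - (r - t₂) by ring,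
          show t₁ - r = (t₁ - t₂) - (r - t₂) by ring]
        exact pt_bound hp (by linarith) (by linarith) (by linarith) (by linarith) hDε
      have := intervalIntegral.norm_integral_le_of_norm_le_const inner
      simpa [abs_of_pos hε] using this
    have outer := intervalIntegral.norm_integral_le_of_norm_le_const key
    rw [show t₁ + ε - t₁ = ε by ring, abs_of_pos hε, Real.norm_eq_abs] at outer
    rw [abs_mul, abs_of_pos (by positivity : (0:ℝ) < 1 / ε ^ 2)]
    calc 1 / ε ^ 2 * |∫ s in t₁..(t₁ + ε), ∫ r in t₂..(t₂ + ε),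
          (|s - r| ^ p - |s - t₂| ^ p - |t₁ - r| ^ p + |t₁ - t₂| ^ p)|
        ≤ 1 / ε ^ 2 * (M * ε * ε) := by
          apply mul_le_mul_of_nonneg_left outer (by positivity)
      _ = M := by field_simp
  · -- Part 2
    set g : ℝ → ℝ := fun u => (1 - u) ^ p - (1 + u) ^ p with hgdef
    have hcont : ContinuousOn g (Set.Icc (0:ℝ) (1/2)) := by
      apply ContinuousOn.sub
      · exact (continuousOn_const.sub continuousOn_id).rpow_const
          (fun x hx => Or.inl (fun h => by simp only [Pi.sub_apply, id] at h; have h2 := hx.2; linarith))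
      · exact (continuousOn_const.add continuousOn_id).rpow_const
          (fun x hx => Or.inl (fun h => by have hx1 := hx.1; simp only [Pi.add_apply, id] at h; linarith))
    have hbdd : BddAbove (g '' Set.Icc (0:ℝ) (1/2)) :=
      (isCompact_Icc.image_of_continuousOn hcont).bddAbove
    set u := ε / (t₁ - t₂) with hudef
    have hu : u ∈ Set.Icc (0:ℝ) (1/2) := by
      constructor
      · positivity
      · rw [hudef, div_le_iff₀ hD]; linarith
    have hle : g u ≤ sSup (g '' Set.Icc (0:ℝ) (1/2)) :=
      le_csSup hbdd ⟨u, hu, rfl⟩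
    have h1u : (0:ℝ) < 1 - u := by have := hu.2; linarith
    have e1 : t₁ - t₂ - ε = (t₁ - t₂) * (1 - u) := by
      rw [hudef]; field_simp [hD.ne']
    have e2 : t₁ - t₂ + ε = (t₁ - t₂) * (1 + u) := by
      rw [hudef]; field_simp [hD.ne']
    have e3 : (t₁ - t₂ - ε) ^ p - (t₁ - t₂ + ε) ^ p = (t₁ - t₂) ^ p * g u := by
      rw [e1, e2, Real.mul_rpow hD.le h1u.le, Real.mul_rpow hD.le (by positivity), hgdef]
      ring
    rw [hMdef, e3, mul_comm (sSup _)]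
    exact mul_le_mul_of_nonneg_left hle (Real.rpow_nonneg hD.le p)
end

section
/- Let α ∈ (0, 1/2) and let a < b be real numbers. There exists a constant C = C(a, b, α) > 0 such that for every φ ∈ L²(ℝ) the function t ↦ I₊^α(φ)(t) is defined almost everywhere on (a, b), belongs to L²((a, b)), and ‖I₊^α(φ)‖_{L²((a,b))} ≤ C ‖φ‖_{L²(ℝ)}. -/
open MeasureTheory

/-- Left-sided fractional integral of order `α` on the real line:
`I₊^α(φ)(t) = (1/Γ(α)) ∫_{-∞}^t (t-s)^{α-1} φ(s) ds`. -/
noncomputable def Iplus (α : ℝ) (φ : ℝ → ℝ) (t : ℝ) : ℝ :=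
  (1 / Real.Gamma α) * ∫ s in Set.Iio t, (t - s) ^ (α - 1) * φ s

open Set ENNReal

private lemma shiftl (t : ℝ) (f : ℝ → ℝ≥0∞) (S : Set ℝ) :
    ∫⁻ s in S, f (t - s) = ∫⁻ u in (fun s => t - s) '' S, f u :=
  (Measure.measurePreserving_sub_left volume t).setLIntegral_comp_emb
    (MeasurableEquiv.subLeft t).measurableEmbedding f S

private lemma shiftr (t : ℝ) (f : ℝ → ℝ≥0∞) (S : Set ℝ) :
    ∫⁻ s in S, f (s - t) = ∫⁻ u in (fun s => s - t) '' S, f u :=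
  (measurePreserving_sub_right volume t).setLIntegral_comp_emb
    (MeasurableEquiv.subRight t).measurableEmbedding f S

private lemma lint_rpow_Ioo {r c : ℝ} (hr : -1 < r) (hc : 0 ≤ c) :
    ∫⁻ u in Ioo 0 c, ENNReal.ofReal (u ^ r) = ENNReal.ofReal (c ^ (r + 1) / (r + 1)) := by
  have hint : IntegrableOn (fun u : ℝ => u ^ r) (Ioo 0 c) volume := by
    have := (intervalIntegral.intervalIntegrable_rpow' (a := 0) (b := c) hr)
    rw [intervalIntegrable_iff_integrableOn_Ioc_of_le hc] at this
    exact this.mono_set Ioo_subset_Ioc_self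
  rw [← ofReal_integral_eq_lintegral_ofReal hint]
  · congr 1
    rw [← MeasureTheory.integral_Ioc_eq_integral_Ioo,
      ← intervalIntegral.integral_of_le hc, integral_rpow (Or.inl hr),
      Real.zero_rpow (by linarith), sub_zero]
  · filter_upwards [ae_restrict_mem measurableSet_Ioo] with u hu
    exact Real.rpow_nonneg hu.1.le r

private lemma lint_rpow_Ioi {r c : ℝ} (hr : r < -1) (hc : 0 < c) :
    ∫⁻ u in Ioi c, ENNReal.ofReal (u ^ r) = ENNReal.ofReal (-c ^ (r + 1) / (r + 1)) := by
  have hint : IntegrableOn (fun u : ℝ => u ^ r) (Ioi c) volume :=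
    integrableOn_Ioi_rpow_of_lt hr hc
  rw [← ofReal_integral_eq_lintegral_ofReal hint]
  · rw [integral_Ioi_rpow_of_lt hr hc]
  · filter_upwards [ae_restrict_mem measurableSet_Ioi] with u hu
    exact Real.rpow_nonneg (le_of_lt (lt_trans hc hu)) r

theorem Iplus_L2_bound (α : ℝ) (hα : α ∈ Set.Ioo (0:ℝ) (1/2)) (a b : ℝ) (hab : a < b) :
    ∃ C > 0, ∀ φ : ℝ → ℝ, MemLp φ 2 volume →
      (∀ᵐ t ∂(volume.restrict (Set.Ioo a b)),
        IntegrableOn (fun s => (t - s) ^ (α - 1) * φ s) (Set.Iio t) volume) ∧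
      MemLp (Iplus α φ) 2 (volume.restrict (Set.Ioo a b)) ∧
      eLpNorm (Iplus α φ) 2 (volume.restrict (Set.Ioo a b))
        ≤ ENNReal.ofReal C * eLpNorm φ 2 volume := by
  obtain ⟨hα0, hα2⟩ := hα
  have hα2' : 2 * α - 2 < -1 := by linarith
  have hα1 : α - 1 ≤ 0 := by linarith
  have hΓ : 0 < Real.Gamma α := Real.Gamma_pos_of_pos hα0
  set R : ℝ := b - a + 1 with hRdef
  have hR : 0 < R := by simp only [hRdef]; linarith
  have hRα : 0 < R ^ α / α := div_pos (Real.rpow_pos_of_pos hR α) hα0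
  set A0 : ℝ := R ^ α / α + 1 / (1 - 2 * α) with hA0def
  set B0 : ℝ := R ^ α / α + (b - a) with hB0def
  have h12 : 0 < 1 - 2 * α := by linarith
  have hA0 : 0 < A0 := by
    have : 0 < 1 / (1 - 2 * α) := by positivity
    simp only [hA0def]; linarith
  have hB0 : 0 < B0 := by simp only [hB0def]; linarith
  set C : ℝ := (1 / Real.Gamma α) * Real.sqrt (A0 * B0) with hCdef
  have hC : 0 < C := mul_pos (by positivity) (Real.sqrt_pos.mpr (mul_pos hA0 hB0))
  refine ⟨C, hC, ?_⟩
  suffices H : ∀ φ : ℝ → ℝ, MemLp φ 2 volume → StronglyMeasurable φ →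
      (∀ᵐ t ∂(volume.restrict (Set.Ioo a b)),
        IntegrableOn (fun s => (t - s) ^ (α - 1) * φ s) (Set.Iio t) volume) ∧
      MemLp (Iplus α φ) 2 (volume.restrict (Set.Ioo a b)) ∧
      eLpNorm (Iplus α φ) 2 (volume.restrict (Set.Ioo a b))
        ≤ ENNReal.ofReal C * eLpNorm φ 2 volume by
    intro φ hφ
    set ψ := hφ.1.mk φ with hψdef
    have hφψ : φ =ᵐ[volume] ψ := hφ.1.ae_eq_mk
    have hψmem : MemLp ψ 2 volume := hφ.ae_eq hφψ
    obtain ⟨h1, h2, h3⟩ := H ψ hψmem hφ.1.stronglyMeasurable_mk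
    have hIeq : Iplus α φ = Iplus α ψ := by
      funext t
      unfold Iplus
      congr 1
      refine integral_congr_ae ?_
      filter_upwards [ae_restrict_of_ae hφψ] with s hs
      rw [hs]
    refine ⟨?_, ?_, ?_⟩
    · filter_upwards [h1] with t ht
      refine ht.congr ?_
      filter_upwards [ae_restrict_of_ae hφψ.symm] with s hs
      rw [hs]
    · rw [hIeq]; exact h2
    · rw [hIeq, eLpNorm_congr_ae hφψ]; exact h3
  intro φ hφ hφm
  have hmeas : Measurable φ := hφm.measurable
  -- the weight
  set w : ℝ → ℝ := fun s => if s < a - 1 then (a - s) ^ (α - 1) else 1 with hwdef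
  have hw_pos : ∀ s, 0 < w s := by
    intro s
    simp only [hwdef]
    split_ifs with hs
    · exact Real.rpow_pos_of_pos (by linarith) _
    · norm_num
  have hw_meas : Measurable w := by
    refine Measurable.ite measurableSet_Iio ?_ measurable_const
    fun_prop
  set g : ℝ → ℝ≥0∞ := fun s => ENNReal.ofReal |φ s| with hgdef
  have hg_meas : Measurable g := by fun_prop
  set K : ℝ → ℝ → ℝ≥0∞ := fun t s => ENNReal.ofReal ((t - s) ^ (α - 1)) with hKdef
  have hK_meas : Measurable (Function.uncurry K) := by
    apply Measurable.ennreal_ofReal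
    fun_prop
  set I2 : ℝ≥0∞ := ∫⁻ s, g s ^ (2:ℝ) with hI2def
  have hsnφ : eLpNorm φ 2 volume = I2 ^ (1/2 : ℝ) := by
    rw [eLpNorm_eq_lintegral_rpow_enorm_toReal (by norm_num) (by norm_num)]
    simp only [hI2def, hgdef, ENNReal.toReal_ofNat, one_div]
    congr 1
    refine lintegral_congr fun s => ?_
    rw [Real.enorm_eq_ofReal_abs]
  have hI2 : I2 < ∞ := by
    have h2 := hφ.2
    rw [hsnφ] at h2
    rcases eq_or_ne I2 ∞ with h | h
    · rw [h, ENNReal.top_rpow_of_pos (by norm_num)] at h2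
      exact absurd h2 (lt_irrefl _)
    · exact h.lt_top
  -- base comparison
  have hbase : ∀ t s : ℝ, s < a - 1 → a ≤ t → (t - s) ^ (α - 1) ≤ (a - s) ^ (α - 1) :=
    fun t s hs hat => Real.rpow_le_rpow_of_nonpos (by linarith) (by linarith) hα1
  -- Fact A
  have factA : ∀ t ∈ Set.Ioo a b,
      (∫⁻ s in Set.Iio t, K t s * ENNReal.ofReal (w s)) ≤ ENNReal.ofReal A0 := by
    intro t ht
    have hat : a - 1 ≤ t := by linarith [ht.1]
    rw [← Set.Iio_union_Ico_eq_Iio hat,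
      lintegral_union measurableSet_Ico
        ((Set.Iio_disjoint_Ici le_rfl).mono_right Set.Ico_subset_Ici_self)]
    have h1 : (∫⁻ s in Set.Iio (a-1), K t s * ENNReal.ofReal (w s))
        ≤ ENNReal.ofReal (1/(1-2*α)) := by
      have hstep : ∀ s ∈ Set.Iio (a-1),
          K t s * ENNReal.ofReal (w s) ≤ ENNReal.ofReal ((a - s) ^ (2*α-2)) := by
        intro s hs
        rw [Set.mem_Iio] at hs
        have h1' : (0:ℝ) < a - s := by linarith
        simp only [hKdef, hwdef, if_pos hs]
        rw [← ENNReal.ofReal_mul (Real.rpow_nonneg (by linarith) _)]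
        apply ENNReal.ofReal_le_ofReal
        calc (t-s)^(α-1) * (a-s)^(α-1)
            ≤ (a-s)^(α-1) * (a-s)^(α-1) :=
              mul_le_mul_of_nonneg_right (hbase t s hs ht.1.le) (Real.rpow_nonneg h1'.le _)
          _ = (a-s)^(2*α-2) := by rw [← Real.rpow_add h1']; ring_nf
      calc ∫⁻ s in Set.Iio (a-1), K t s * ENNReal.ofReal (w s)
          ≤ ∫⁻ s in Set.Iio (a-1), ENNReal.ofReal ((a - s)^(2*α-2)) := by
            refine lintegral_mono_ae ?_
            filter_upwards [ae_restrict_mem measurableSet_Iio] with s hs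
            exact hstep s hs
        _ = ∫⁻ u in (fun s => a - s) '' Set.Iio (a-1), ENNReal.ofReal (u ^ (2*α-2)) :=
            shiftl a (fun u => ENNReal.ofReal (u ^ (2*α-2))) (Set.Iio (a-1))
        _ = ∫⁻ u in Set.Ioi (1:ℝ), ENNReal.ofReal (u ^ (2*α-2)) := by
            rw [Set.image_const_sub_Iio]; norm_num
        _ = ENNReal.ofReal (-1 ^ (2*α-2+1) / (2*α-2+1)) := lint_rpow_Ioi hα2' one_pos
        _ = ENNReal.ofReal (1/(1-2*α)) := by
            rw [Real.one_rpow]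
            congr 1
            rw [div_eq_div_iff (by linarith) (by linarith)]
            ring
    have h2 : (∫⁻ s in Set.Ico (a-1) t, K t s * ENNReal.ofReal (w s))
        ≤ ENNReal.ofReal (R ^ α / α) := by
      calc ∫⁻ s in Set.Ico (a-1) t, K t s * ENNReal.ofReal (w s)
          = ∫⁻ s in Set.Ico (a-1) t, ENNReal.ofReal ((t - s)^(α-1)) := by
            refine lintegral_congr_ae ?_
            filter_upwards [ae_restrict_mem measurableSet_Ico] with s hs
            simp only [hKdef, hwdef, if_neg (not_lt.mpr hs.1), ENNReal.ofReal_one, mul_one]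
        _ = ∫⁻ u in (fun s => t - s) '' Set.Ico (a-1) t, ENNReal.ofReal (u ^ (α-1)) :=
            shiftl t (fun u => ENNReal.ofReal (u ^ (α-1))) (Set.Ico (a-1) t)
        _ = ∫⁻ u in Set.Ioc 0 (t - (a-1)), ENNReal.ofReal (u ^ (α-1)) := by
            rw [Set.image_const_sub_Ico, sub_self]
        _ = ∫⁻ u in Set.Ioo 0 (t - (a-1)), ENNReal.ofReal (u ^ (α-1)) := by
            rw [MeasureTheory.restrict_Ioo_eq_restrict_Ioc]
        _ = ENNReal.ofReal ((t - (a-1)) ^ (α-1+1) / (α-1+1)) :=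
            lint_rpow_Ioo (by linarith) (by linarith)
        _ ≤ ENNReal.ofReal (R ^ α / α) := by
            apply ENNReal.ofReal_le_ofReal
            rw [show α - 1 + 1 = α by ring]
            have hb1 : (t - (a-1)) ^ α ≤ R ^ α :=
              Real.rpow_le_rpow (by linarith) (by simp only [hRdef]; linarith [ht.2]) hα0.le
            exact div_le_div_of_nonneg_right hb1 hα0.le
    calc (∫⁻ s in Set.Iio (a-1), K t s * ENNReal.ofReal (w s))
          + ∫⁻ s in Set.Ico (a-1) t, K t s * ENNReal.ofReal (w s)
        ≤ ENNReal.ofReal (1/(1-2*α)) + ENNReal.ofReal (R ^ α / α) := add_le_add h1 h2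
      _ = ENNReal.ofReal A0 := by
          rw [← ENNReal.ofReal_add (by positivity) (by positivity)]
          simp only [hA0def]
          ring_nf
  -- Fact B
  have factB : ∀ s : ℝ, (∫⁻ t in Set.Ioo a b ∩ Set.Ioi s, K t s)
      ≤ ENNReal.ofReal (B0 * w s) := by
    intro s
    by_cases hs : s < a - 1
    · have hws : w s = (a - s) ^ (α-1) := if_pos hs
      have hsub : Set.Ioo a b ∩ Set.Ioi s = Set.Ioo a b :=
        Set.inter_eq_left.mpr (fun t ht => by
          simp only [Set.mem_Ioi]; have := ht.1; linarith)
      rw [hsub]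
      calc ∫⁻ t in Set.Ioo a b, K t s
          ≤ ∫⁻ _ in Set.Ioo a b, ENNReal.ofReal ((a - s)^(α-1)) := by
            refine lintegral_mono_ae ?_
            filter_upwards [ae_restrict_mem measurableSet_Ioo] with t ht
            exact ENNReal.ofReal_le_ofReal (hbase t s hs ht.1.le)
        _ = ENNReal.ofReal ((a-s)^(α-1)) * volume (Set.Ioo a b) := setLIntegral_const _ _
        _ = ENNReal.ofReal ((a-s)^(α-1)) * ENNReal.ofReal (b - a) := by rw [Real.volume_Ioo]
        _ = ENNReal.ofReal ((a-s)^(α-1) * (b-a)) :=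
            (ENNReal.ofReal_mul (Real.rpow_nonneg (by linarith) _)).symm
        _ ≤ ENNReal.ofReal (B0 * w s) := by
            rw [hws]
            apply ENNReal.ofReal_le_ofReal
            have h1 : 0 ≤ (a-s)^(α-1) := Real.rpow_nonneg (by linarith) _
            have h2 : b - a ≤ B0 := by simp only [hB0def]; linarith
            nlinarith
    · have hws : w s = 1 := if_neg hs
      push_neg at hs
      have hsub : Set.Ioo a b ∩ Set.Ioi s ⊆ Set.Ioo s (s + R) := by
        rintro t ⟨⟨hta, htb⟩, hts⟩
        exact ⟨hts, by simp only [hRdef]; linarith⟩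
      calc ∫⁻ t in Set.Ioo a b ∩ Set.Ioi s, K t s
          ≤ ∫⁻ t in Set.Ioo s (s + R), K t s := lintegral_mono_set hsub
        _ = ∫⁻ u in (fun t => t - s) '' Set.Ioo s (s+R), ENNReal.ofReal (u ^ (α-1)) :=
            shiftr s (fun u => ENNReal.ofReal (u ^ (α-1))) (Set.Ioo s (s+R))
        _ = ∫⁻ u in Set.Ioo 0 R, ENNReal.ofReal (u ^ (α-1)) := by
            rw [Set.image_sub_const_Ioo, sub_self, add_sub_cancel_left]
        _ = ENNReal.ofReal (R ^ (α-1+1) / (α-1+1)) := lint_rpow_Ioo (by linarith) hR.le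
        _ ≤ ENNReal.ofReal (B0 * w s) := by
            rw [hws, mul_one]
            apply ENNReal.ofReal_le_ofReal
            rw [show α - 1 + 1 = α by ring]
            simp only [hB0def]; linarith
  -- algebraic helpers in ℝ≥0∞
  have h2rpow : ∀ x : ℝ≥0∞, x ^ (2:ℝ) = x * x := fun x => by
    rw [show (2:ℝ) = ((2:ℕ):ℝ) by norm_num, ENNReal.rpow_natCast, sq]
  have hhalf : ∀ x : ℝ≥0∞, (x ^ (2:ℝ)) ^ (1/2:ℝ) = x := fun x => by
    rw [← ENNReal.rpow_mul]; norm_num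
  have hhalf' : ∀ x : ℝ≥0∞, (x ^ (1/2:ℝ)) ^ (2:ℝ) = x := fun x => by
    rw [← ENNReal.rpow_mul]; norm_num
  have hww : ∀ s, ENNReal.ofReal (w s) * ENNReal.ofReal (w s)⁻¹ = 1 := fun s => by
    rw [← ENNReal.ofReal_mul (hw_pos s).le, mul_inv_cancel₀ (hw_pos s).ne', ENNReal.ofReal_one]
  set G : ℝ → ℝ≥0∞ :=
    fun t => ∫⁻ s in Set.Iio t, K t s * (g s ^ (2:ℝ) * ENNReal.ofReal (w s)⁻¹) with hGdef
  -- Cauchy-Schwarz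
  have factCS : ∀ t ∈ Set.Ioo a b,
      (∫⁻ s in Set.Iio t, K t s * g s) ^ (2:ℝ) ≤ ENNReal.ofReal A0 * G t := by
    intro t ht
    set F₁ : ℝ → ℝ≥0∞ := fun s => (K t s * ENNReal.ofReal (w s)) ^ (1/2:ℝ) with hF₁
    set F₂ : ℝ → ℝ≥0∞ :=
      fun s => (K t s * (g s ^ (2:ℝ) * ENNReal.ofReal (w s)⁻¹)) ^ (1/2:ℝ) with hF₂
    have hprod : ∀ s, K t s * g s = F₁ s * F₂ s := by
      intro s
      simp only [hF₁, hF₂]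
      rw [← ENNReal.mul_rpow_of_nonneg _ _ (by norm_num : (0:ℝ) ≤ 1/2)]
      rw [show (K t s * ENNReal.ofReal (w s))
            * (K t s * (g s ^ (2:ℝ) * ENNReal.ofReal (w s)⁻¹))
          = (K t s * g s) * (K t s * g s)
            * (ENNReal.ofReal (w s) * ENNReal.ofReal (w s)⁻¹) from by
        rw [h2rpow (g s)]; ring]
      rw [hww s, mul_one, ← h2rpow, hhalf]
    have hKt_meas : Measurable (K t) := by
      apply Measurable.ennreal_ofReal; fun_prop
    have hmF₁ : AEMeasurable F₁ (volume.restrict (Set.Iio t)) :=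
      ((hKt_meas.mul (hw_meas.ennreal_ofReal)).pow_const _).aemeasurable
    have hmF₂ : AEMeasurable F₂ (volume.restrict (Set.Iio t)) :=
      ((hKt_meas.mul ((hg_meas.pow_const _).mul
        (hw_meas.inv.ennreal_ofReal))).pow_const _).aemeasurable
    have h22 : (2:ℝ).HolderConjugate 2 := Real.HolderConjugate.two_two
    have hH := ENNReal.lintegral_mul_le_Lp_mul_Lq (volume.restrict (Set.Iio t)) h22 hmF₁ hmF₂
    have hFsq₁ : ∀ s, F₁ s ^ (2:ℝ) = K t s * ENNReal.ofReal (w s) := fun s => hhalf' _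
    have hFsq₂ : ∀ s, F₂ s ^ (2:ℝ) = K t s * (g s ^ (2:ℝ) * ENNReal.ofReal (w s)⁻¹) :=
      fun s => hhalf' _
    calc (∫⁻ s in Set.Iio t, K t s * g s) ^ (2:ℝ)
        = (∫⁻ s in Set.Iio t, (F₁ * F₂) s) ^ (2:ℝ) := by
          congr 1; exact lintegral_congr fun s => hprod s
      _ ≤ ((∫⁻ s in Set.Iio t, F₁ s ^ (2:ℝ)) ^ (1/2:ℝ)
            * (∫⁻ s in Set.Iio t, F₂ s ^ (2:ℝ)) ^ (1/2:ℝ)) ^ (2:ℝ) :=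
          ENNReal.rpow_le_rpow hH (by norm_num)
      _ = (∫⁻ s in Set.Iio t, F₁ s ^ (2:ℝ)) * (∫⁻ s in Set.Iio t, F₂ s ^ (2:ℝ)) := by
          rw [ENNReal.mul_rpow_of_nonneg _ _ (by norm_num : (0:ℝ) ≤ 2), hhalf', hhalf']
      _ = (∫⁻ s in Set.Iio t, K t s * ENNReal.ofReal (w s)) * G t := by
          simp only [hGdef]
          congr 1
          · exact lintegral_congr fun s => hFsq₁ s
          · exact lintegral_congr fun s => hFsq₂ s
      _ ≤ ENNReal.ofReal A0 * G t := mul_le_mul_left (factA t ht) _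
  -- Tonelli
  set q : ℝ → ℝ → ℝ≥0∞ :=
    fun t s => if s < t then K t s * (g s ^ (2:ℝ) * ENNReal.ofReal (w s)⁻¹) else 0 with hqdef
  have hm_inner : Measurable (fun s => g s ^ (2:ℝ) * ENNReal.ofReal (w s)⁻¹) :=
    (hg_meas.pow_const _).mul (hw_meas.inv.ennreal_ofReal)
  have hq_meas : Measurable (Function.uncurry q) := by
    have : Function.uncurry q = fun p : ℝ × ℝ =>
        if p.2 < p.1 then K p.1 p.2 * (g p.2 ^ (2:ℝ) * ENNReal.ofReal (w p.2)⁻¹) else 0 := rfl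
    rw [this]
    exact Measurable.ite (measurableSet_lt measurable_snd measurable_fst)
      (hK_meas.mul (hm_inner.comp measurable_snd)) measurable_const
  have hGq : ∀ t, G t = ∫⁻ s, q t s := by
    intro t
    simp only [hGdef]
    rw [← lintegral_indicator measurableSet_Iio]
    refine lintegral_congr fun s => ?_
    rw [Set.indicator_apply]
    simp only [Set.mem_Iio, hqdef]
  have hG_meas : Measurable G := by
    have : G = fun t => ∫⁻ s, q t s := funext hGq
    rw [this]
    exact Measurable.lintegral_prod_right hq_meas
  have factT : (∫⁻ t in Set.Ioo a b, G t) ≤ ENNReal.ofReal B0 * I2 := by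
    have hinner : ∀ s : ℝ, (∫⁻ t in Set.Ioo a b, q t s)
        ≤ ENNReal.ofReal B0 * g s ^ (2:ℝ) := by
      intro s
      have hrepr : ∀ t, q t s = Set.indicator (Set.Ioi s) (fun t => K t s) t
          * (g s ^ (2:ℝ) * ENNReal.ofReal (w s)⁻¹) := by
        intro t
        rw [Set.indicator_apply]
        simp only [Set.mem_Ioi, hqdef]
        by_cases h : s < t <;> simp [h]
      have hKs_meas : Measurable (fun t => K t s) := by
        apply Measurable.ennreal_ofReal; fun_prop
      calc ∫⁻ t in Set.Ioo a b, q t s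
          = (∫⁻ t in Set.Ioo a b, Set.indicator (Set.Ioi s) (fun t => K t s) t)
            * (g s ^ (2:ℝ) * ENNReal.ofReal (w s)⁻¹) := by
            rw [← lintegral_mul_const _ (hKs_meas.indicator measurableSet_Ioi)]
            exact lintegral_congr fun t => hrepr t
        _ = (∫⁻ t in Set.Ioo a b ∩ Set.Ioi s, K t s)
            * (g s ^ (2:ℝ) * ENNReal.ofReal (w s)⁻¹) := by
            congr 1
            rw [lintegral_indicator measurableSet_Ioi,
              Measure.restrict_restrict measurableSet_Ioi, Set.inter_comm]
        _ ≤ ENNReal.ofReal (B0 * w s) * (g s ^ (2:ℝ) * ENNReal.ofReal (w s)⁻¹) :=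
            mul_le_mul_left (factB s) _
        _ = ENNReal.ofReal B0 * g s ^ (2:ℝ) := by
            rw [ENNReal.ofReal_mul hB0.le,
              show ENNReal.ofReal B0 * ENNReal.ofReal (w s)
                  * (g s ^ (2:ℝ) * ENNReal.ofReal (w s)⁻¹)
                = ENNReal.ofReal B0 * g s ^ (2:ℝ)
                  * (ENNReal.ofReal (w s) * ENNReal.ofReal (w s)⁻¹) from by ring,
              hww s, mul_one]
    calc ∫⁻ t in Set.Ioo a b, G t
        = ∫⁻ t in Set.Ioo a b, ∫⁻ s, q t s := lintegral_congr fun t => hGq t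
      _ = ∫⁻ s, ∫⁻ t in Set.Ioo a b, q t s := lintegral_lintegral_swap hq_meas.aemeasurable
      _ ≤ ∫⁻ s, ENNReal.ofReal B0 * g s ^ (2:ℝ) := lintegral_mono fun s => hinner s
      _ = ENNReal.ofReal B0 * I2 := lintegral_const_mul _ (hg_meas.pow_const _)
  have hGlim : (∫⁻ t in Set.Ioo a b, G t) ≠ ∞ :=
    (lt_of_le_of_lt factT (ENNReal.mul_lt_top ENNReal.ofReal_lt_top hI2)).ne
  have hGae : ∀ᵐ t ∂(volume.restrict (Set.Ioo a b)), G t < ∞ := ae_lt_top hG_meas hGlim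
  -- identification of the enorm integrand
  have hKg : ∀ t : ℝ, (∫⁻ s in Set.Iio t, (‖(t - s)^(α-1) * φ s‖₊ : ℝ≥0∞))
      = ∫⁻ s in Set.Iio t, K t s * g s := by
    intro t
    refine lintegral_congr_ae ?_
    filter_upwards [ae_restrict_mem measurableSet_Iio] with s hs
    rw [Set.mem_Iio] at hs
    have h0 : 0 ≤ (t - s) ^ (α-1) := Real.rpow_nonneg (by linarith) _
    rw [← enorm_eq_nnnorm, Real.enorm_eq_ofReal_abs, abs_mul, abs_of_nonneg h0, ENNReal.ofReal_mul h0]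
  have hfin : ∀ᵐ t ∂(volume.restrict (Set.Ioo a b)),
      (∫⁻ s in Set.Iio t, K t s * g s) < ∞ := by
    filter_upwards [hGae, ae_restrict_mem measurableSet_Ioo] with t hGt ht
    by_contra hcon
    push_neg at hcon
    have htop : (∫⁻ s in Set.Iio t, K t s * g s) = ∞ := top_le_iff.mp hcon
    have h := factCS t ht
    rw [htop, ENNReal.top_rpow_of_pos (by norm_num : (0:ℝ) < 2)] at h
    exact (ENNReal.mul_lt_top ENNReal.ofReal_lt_top hGt).ne (top_le_iff.mp h)
  have hIntOn : ∀ᵐ t ∂(volume.restrict (Set.Ioo a b)),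
      IntegrableOn (fun s => (t - s) ^ (α - 1) * φ s) (Set.Iio t) volume := by
    filter_upwards [hfin] with t hft
    refine ⟨(Measurable.aestronglyMeasurable ?_), ?_⟩
    · fun_prop
    · rw [hasFiniteIntegral_def _ _]; simp only [enorm_eq_nnnorm]; rw [hKg t]
      exact hft
  -- pointwise enorm bound for Iplus
  have hIb : ∀ t : ℝ, (‖Iplus α φ t‖₊ : ℝ≥0∞)
      ≤ ENNReal.ofReal (1/Real.Gamma α) * ∫⁻ s in Set.Iio t, K t s * g s := by
    intro t
    have : Iplus α φ t = (1 / Real.Gamma α) * ∫ s in Set.Iio t, (t - s) ^ (α - 1) * φ s := rfl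
    rw [this]
    calc (‖(1 / Real.Gamma α) * ∫ s in Set.Iio t, (t - s) ^ (α - 1) * φ s‖₊ : ℝ≥0∞)
        = (‖(1 / Real.Gamma α)‖₊ : ℝ≥0∞)
          * (‖∫ s in Set.Iio t, (t - s) ^ (α - 1) * φ s‖₊ : ℝ≥0∞) := by
          rw [nnnorm_mul]; push_cast; ring
      _ ≤ (‖(1 / Real.Gamma α)‖₊ : ℝ≥0∞)
          * ∫⁻ s in Set.Iio t, (‖(t - s)^(α-1) * φ s‖₊ : ℝ≥0∞) :=
          mul_le_mul_right (enorm_integral_le_lintegral_enorm _) _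
      _ = ENNReal.ofReal (1/Real.Gamma α) * ∫⁻ s in Set.Iio t, K t s * g s := by
          rw [hKg t, ← enorm_eq_nnnorm, Real.enorm_eq_ofReal_abs, abs_of_pos (by positivity)]
  -- the main quantitative estimate
  have hmain : (∫⁻ t in Set.Ioo a b, (‖Iplus α φ t‖₊ : ℝ≥0∞) ^ (2:ℝ))
      ≤ ENNReal.ofReal (C^2) * I2 := by
    have hCsq : ENNReal.ofReal (C^2)
        = ENNReal.ofReal ((1/Real.Gamma α)^2) * (ENNReal.ofReal A0 * ENNReal.ofReal B0) := by
      rw [← ENNReal.ofReal_mul hA0.le, ← ENNReal.ofReal_mul (by positivity)]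
      congr 1
      simp only [hCdef]
      rw [mul_pow, Real.sq_sqrt (mul_pos hA0 hB0).le]
    calc ∫⁻ t in Set.Ioo a b, (‖Iplus α φ t‖₊ : ℝ≥0∞) ^ (2:ℝ)
        ≤ ∫⁻ t in Set.Ioo a b,
            ENNReal.ofReal ((1/Real.Gamma α)^2) * (ENNReal.ofReal A0 * G t) := by
          refine lintegral_mono_ae ?_
          filter_upwards [ae_restrict_mem measurableSet_Ioo] with t ht
          calc ((‖Iplus α φ t‖₊ : ℝ≥0∞)) ^ (2:ℝ)
              ≤ (ENNReal.ofReal (1/Real.Gamma α) * ∫⁻ s in Set.Iio t, K t s * g s) ^ (2:ℝ) :=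
                ENNReal.rpow_le_rpow (hIb t) (by norm_num)
            _ = ENNReal.ofReal (1/Real.Gamma α) ^ (2:ℝ)
                * (∫⁻ s in Set.Iio t, K t s * g s) ^ (2:ℝ) :=
                ENNReal.mul_rpow_of_nonneg _ _ (by norm_num)
            _ ≤ ENNReal.ofReal (1/Real.Gamma α) ^ (2:ℝ) * (ENNReal.ofReal A0 * G t) :=
                mul_le_mul_right (factCS t ht) _
            _ = ENNReal.ofReal ((1/Real.Gamma α)^2) * (ENNReal.ofReal A0 * G t) := by
                congr 1
                rw [ENNReal.ofReal_rpow_of_nonneg (by positivity) (by norm_num)]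
                norm_num
      _ = ENNReal.ofReal ((1/Real.Gamma α)^2)
          * (ENNReal.ofReal A0 * ∫⁻ t in Set.Ioo a b, G t) := by
          rw [lintegral_const_mul _ (hG_meas.const_mul _),
            lintegral_const_mul _ hG_meas]
      _ ≤ ENNReal.ofReal ((1/Real.Gamma α)^2)
          * (ENNReal.ofReal A0 * (ENNReal.ofReal B0 * I2)) := by
          gcongr
      _ = ENNReal.ofReal (C^2) * I2 := by rw [hCsq]; ring
  -- measurability of Iplus
  have hae : AEStronglyMeasurable (Iplus α φ) (volume.restrict (Set.Ioo a b)) := by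
    have hker : StronglyMeasurable (fun p : ℝ × ℝ =>
        if p.2 < p.1 then (p.1 - p.2) ^ (α - 1) * φ p.2 else 0) := by
      apply Measurable.stronglyMeasurable
      exact Measurable.ite (measurableSet_lt measurable_snd measurable_fst)
        (by fun_prop) measurable_const
    have hrepr : Iplus α φ = fun t => (1 / Real.Gamma α)
        * ∫ s, (fun p : ℝ × ℝ => if p.2 < p.1 then (p.1 - p.2) ^ (α - 1) * φ p.2 else 0)
            (t, s) := by
      funext t
      unfold Iplus
      congr 1
      rw [← integral_indicator measurableSet_Iio]
      refine integral_congr_ae (Filter.Eventually.of_forall fun s => ?_)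
      rw [Set.indicator_apply]
      simp only [Set.mem_Iio]
    rw [hrepr]
    exact (hker.integral_prod_right'.const_mul _).aestronglyMeasurable
  -- final bound
  have hlhs : eLpNorm (Iplus α φ) 2 (volume.restrict (Set.Ioo a b))
      = (∫⁻ t in Set.Ioo a b, (‖Iplus α φ t‖₊ : ℝ≥0∞) ^ (2:ℝ)) ^ (1/2:ℝ) := by
    rw [eLpNorm_eq_lintegral_rpow_enorm_toReal (by norm_num) (by norm_num)]
    norm_num
    rfl
  have hbound : eLpNorm (Iplus α φ) 2 (volume.restrict (Set.Ioo a b))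
      ≤ ENNReal.ofReal C * eLpNorm φ 2 volume := by
    rw [hlhs, hsnφ]
    calc (∫⁻ t in Set.Ioo a b, (‖Iplus α φ t‖₊ : ℝ≥0∞) ^ (2:ℝ)) ^ (1/2:ℝ)
        ≤ (ENNReal.ofReal (C^2) * I2) ^ (1/2:ℝ) :=
          ENNReal.rpow_le_rpow hmain (by norm_num)
      _ = ENNReal.ofReal C * I2 ^ (1/2:ℝ) := by
          rw [ENNReal.mul_rpow_of_nonneg _ _ (by norm_num : (0:ℝ) ≤ 1/2)]
          congr 1
          rw [ENNReal.ofReal_rpow_of_nonneg (by positivity) (by norm_num)]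
          congr 1
          rw [← Real.rpow_natCast C 2, ← Real.rpow_mul hC.le]
          norm_num
  exact ⟨hIntOn, ⟨hae, lt_of_le_of_lt hbound
    (ENNReal.mul_lt_top ENNReal.ofReal_lt_top hφ.2)⟩, hbound⟩
end

section
/- Let α ∈ (0, 1/2), let a < b be real numbers, let f ∈ L²((a, b)) and g ∈ L²(ℝ). Then ∫_a^b ∫_ℝ |f(t)| (t-s)₊^{α-1} |g(s)| ds dt < ∞, and ∫_a^b f(t) I₊^α(g)(t) dt = ∫_ℝ I₋^α(1_{(a,b)} f)(s) g(s) ds. -/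
open MeasureTheory

/-- Right-sided fractional integral of order `α` on the real line:
`I₋^α(φ)(s) = (1/Γ(α)) ∫_s^∞ (r-s)^{α-1} φ(r) dr`. -/
noncomputable def Iminus (α : ℝ) (φ : ℝ → ℝ) (s : ℝ) : ℝ :=
  (1 / Real.Gamma α) * ∫ r in Set.Ioi s, (r - s) ^ (α - 1) * φ r

open Set ENNReal

namespace FracIBP

lemma pospow_nonneg (x γ : ℝ) : 0 ≤ pospow x γ := by
  unfold pospow; split_ifs with h
  · exact Real.rpow_nonneg h.le γ
  · exact le_refl 0

lemma measurable_pospow (γ : ℝ) : Measurable fun x : ℝ => pospow x γ := by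
  unfold pospow
  exact Measurable.ite (measurableSet_lt measurable_const measurable_id)
    (measurable_id.pow_const γ) measurable_const

/-- The (ENNReal-valued) kernel. -/
noncomputable def ker (α : ℝ) (z : ℝ × ℝ) : ℝ≥0∞ := ENNReal.ofReal (pospow (z.1 - z.2) (α - 1))

/-- Near-diagonal part of the kernel. -/
noncomputable def kerN (α : ℝ) (z : ℝ × ℝ) : ℝ≥0∞ := if z.1 - z.2 < 1 then ker α z else 0

/-- Far part of the kernel. -/
noncomputable def kerF (α : ℝ) (z : ℝ × ℝ) : ℝ≥0∞ := if z.1 - z.2 < 1 then 0 else ker α z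

lemma measurable_ker (α : ℝ) : Measurable (ker α) :=
  ENNReal.measurable_ofReal.comp
    ((measurable_pospow (α - 1)).comp (measurable_fst.sub measurable_snd))

lemma measurable_kerN (α : ℝ) : Measurable (kerN α) :=
  Measurable.ite (measurableSet_lt (measurable_fst.sub measurable_snd) measurable_const)
    (measurable_ker α) measurable_const

lemma measurable_kerF (α : ℝ) : Measurable (kerF α) :=
  Measurable.ite (measurableSet_lt (measurable_fst.sub measurable_snd) measurable_const)
    measurable_const (measurable_ker α)

lemma ker_split (α : ℝ) (z : ℝ × ℝ) : ker α z = kerN α z + kerF α z := by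
  unfold kerN kerF; split_ifs with h <;> simp

lemma lintegral_Ioo01_rpow {γ : ℝ} (hγ : -1 < γ) :
    ∫⁻ u in Ioo (0:ℝ) 1, ENNReal.ofReal (u ^ γ) = ENNReal.ofReal (1 / (γ + 1)) := by
  have hint : IntegrableOn (fun u : ℝ => u ^ γ) (Ioo 0 1) := by
    have h := intervalIntegral.intervalIntegrable_rpow' (a := (0:ℝ)) (b := 1) hγ
    rw [intervalIntegrable_iff_integrableOn_Ioc_of_le zero_le_one] at h
    exact h.mono_set Ioo_subset_Ioc_self
  have hnn : 0 ≤ᵐ[volume.restrict (Ioo (0:ℝ) 1)] fun u : ℝ => u ^ γ := by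
    filter_upwards [ae_restrict_mem measurableSet_Ioo] with u hu
    exact Real.rpow_nonneg hu.1.le γ
  rw [← ofReal_integral_eq_lintegral_ofReal hint hnn]
  congr 1
  rw [← integral_Ioc_eq_integral_Ioo]
  have h2 : ∫ u in Set.Ioc (0:ℝ) 1, u ^ γ = ∫ u in (0:ℝ)..1, u ^ γ :=
    (intervalIntegral.integral_of_le zero_le_one).symm
  rw [h2, integral_rpow (Or.inl hγ), Real.one_rpow,
    Real.zero_rpow (by linarith)]
  norm_num

lemma lintegral_Ioi1_rpow {γ : ℝ} (hγ : γ < -1) :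
    ∫⁻ u in Ioi (1:ℝ), ENNReal.ofReal (u ^ γ) = ENNReal.ofReal (-1 / (γ + 1)) := by
  have hint : IntegrableOn (fun u : ℝ => u ^ γ) (Ioi 1) :=
    integrableOn_Ioi_rpow_of_lt hγ zero_lt_one
  have hnn : 0 ≤ᵐ[volume.restrict (Ioi (1:ℝ))] fun u : ℝ => u ^ γ := by
    filter_upwards [ae_restrict_mem measurableSet_Ioi] with u hu
    simp only [mem_Ioi] at hu
    exact Real.rpow_nonneg (by linarith) γ
  rw [← ofReal_integral_eq_lintegral_ofReal hint hnn]
  congr 1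
  rw [integral_Ioi_rpow_of_lt hγ zero_lt_one, Real.one_rpow, neg_div]

lemma measurable_ofReal_rpow (γ : ℝ) : Measurable fun u : ℝ => ENNReal.ofReal (u ^ γ) :=
  ENNReal.measurable_ofReal.comp (measurable_id.pow_const γ)

lemma near_slice_t {α : ℝ} (hα0 : 0 < α) (t : ℝ) :
    ∫⁻ s in Ioo (t - 1) t, ENNReal.ofReal ((t - s) ^ (α - 1)) = ENNReal.ofReal (1 / α) := by
  have hpre : (fun s : ℝ => t - s) ⁻¹' Ioo 0 1 = Ioo (t - 1) t := by
    ext s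
    simp only [mem_preimage, mem_Ioo]
    constructor <;> intro h <;> exact ⟨by linarith [h.1, h.2], by linarith [h.1, h.2]⟩
  have hsub : ∫⁻ s in Ioo (t - 1) t, ENNReal.ofReal ((t - s) ^ (α - 1))
      = ∫⁻ u in Ioo (0:ℝ) 1, ENNReal.ofReal (u ^ (α - 1)) := by
    rw [← hpre]
    exact (Measure.measurePreserving_sub_left volume t).setLIntegral_comp_preimage measurableSet_Ioo
      (measurable_ofReal_rpow (α - 1))
  rw [hsub, lintegral_Ioo01_rpow (by linarith)]
  norm_num

lemma near_slice_s {α : ℝ} (hα0 : 0 < α) (s : ℝ) :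
    ∫⁻ t in Ioo s (s + 1), ENNReal.ofReal ((t - s) ^ (α - 1)) = ENNReal.ofReal (1 / α) := by
  have hpre : (fun t : ℝ => t - s) ⁻¹' Ioo 0 1 = Ioo s (s + 1) := by
    ext t
    simp only [mem_preimage, mem_Ioo]
    constructor <;> intro h <;> exact ⟨by linarith [h.1, h.2], by linarith [h.1, h.2]⟩
  have hsub : ∫⁻ t in Ioo s (s + 1), ENNReal.ofReal ((t - s) ^ (α - 1))
      = ∫⁻ u in Ioo (0:ℝ) 1, ENNReal.ofReal (u ^ (α - 1)) := by
    rw [← hpre]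
    exact (measurePreserving_sub_right volume s).setLIntegral_comp_preimage measurableSet_Ioo
      (measurable_ofReal_rpow (α - 1))
  rw [hsub, lintegral_Ioo01_rpow (by linarith)]
  norm_num

lemma far_slice {γ : ℝ} (hγ : γ < -1) (t : ℝ) :
    ∫⁻ s in Iic (t - 1), ENNReal.ofReal ((t - s) ^ γ) = ENNReal.ofReal (-1 / (γ + 1)) := by
  have hpre : (fun s : ℝ => t - s) ⁻¹' Ici 1 = Iic (t - 1) := by
    ext s
    simp only [mem_preimage, mem_Ici, mem_Iic]
    constructor <;> intro h <;> linarith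
  have hsub : ∫⁻ s in Iic (t - 1), ENNReal.ofReal ((t - s) ^ γ)
      = ∫⁻ u in Ici (1:ℝ), ENNReal.ofReal (u ^ γ) := by
    rw [← hpre]
    exact (Measure.measurePreserving_sub_left volume t).setLIntegral_comp_preimage measurableSet_Ici
      (measurable_ofReal_rpow γ)
  rw [hsub, setLIntegral_congr (Filter.EventuallyEq.symm Ioi_ae_eq_Ici),
    lintegral_Ioi1_rpow hγ]

lemma kerN_le_indicator (α t s : ℝ) :
    kerN α (t, s) ≤ (Ioo (t - 1) t).indicator (fun s => ENNReal.ofReal ((t - s) ^ (α - 1))) s := by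
  unfold kerN ker
  simp only
  split_ifs with h1
  · by_cases h0 : 0 < t - s
    · have hs : s ∈ Ioo (t - 1) t := ⟨by linarith, by linarith⟩
      rw [indicator_of_mem hs]
      unfold pospow
      rw [if_pos h0]
    · unfold pospow
      rw [if_neg h0]
      simp
  · simp

lemma kerN_le_indicator' (α t s : ℝ) :
    kerN α (t, s) ≤ (Ioo s (s + 1)).indicator (fun t => ENNReal.ofReal ((t - s) ^ (α - 1))) t := by
  unfold kerN ker
  simp only
  split_ifs with h1
  · by_cases h0 : 0 < t - s
    · have ht : t ∈ Ioo s (s + 1) := ⟨by linarith, by linarith⟩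
      rw [indicator_of_mem ht]
      unfold pospow
      rw [if_pos h0]
    · unfold pospow
      rw [if_neg h0]
      simp
  · simp

lemma kerF_sq_le_indicator (α t s : ℝ) :
    kerF α (t, s) ^ (2:ℝ)
      ≤ (Iic (t - 1)).indicator (fun s => ENNReal.ofReal ((t - s) ^ ((α - 1) * 2))) s := by
  unfold kerF ker
  simp only
  split_ifs with h1
  · rw [ENNReal.zero_rpow_of_pos (by norm_num)]
    simp
  · have h1' : (1:ℝ) ≤ t - s := not_lt.mp h1
    have h0 : (0:ℝ) < t - s := by linarith
    have hs : s ∈ Iic (t - 1) := by simp only [mem_Iic]; linarith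
    rw [indicator_of_mem hs]
    unfold pospow
    rw [if_pos h0, ENNReal.ofReal_rpow_of_nonneg (Real.rpow_nonneg h0.le _)
        (by norm_num : (0:ℝ) ≤ 2), ← Real.rpow_mul h0.le]

lemma kerN_slice_t {α : ℝ} (hα0 : 0 < α) (t : ℝ) :
    ∫⁻ s, kerN α (t, s) ≤ ENNReal.ofReal (1 / α) := by
  calc ∫⁻ s, kerN α (t, s)
      ≤ ∫⁻ s, (Ioo (t - 1) t).indicator (fun s => ENNReal.ofReal ((t - s) ^ (α - 1))) s :=
        lintegral_mono fun s => kerN_le_indicator α t s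
    _ = ∫⁻ s in Ioo (t - 1) t, ENNReal.ofReal ((t - s) ^ (α - 1)) :=
        lintegral_indicator measurableSet_Ioo _
    _ = ENNReal.ofReal (1 / α) := near_slice_t hα0 t

lemma kerN_slice_s {α : ℝ} (hα0 : 0 < α) (A : Set ℝ) (s : ℝ) :
    ∫⁻ t in A, kerN α (t, s) ≤ ENNReal.ofReal (1 / α) := by
  calc ∫⁻ t in A, kerN α (t, s)
      ≤ ∫⁻ t in A, (Ioo s (s + 1)).indicator (fun t => ENNReal.ofReal ((t - s) ^ (α - 1))) t :=
        lintegral_mono fun t => kerN_le_indicator' α t s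
    _ ≤ ∫⁻ t, (Ioo s (s + 1)).indicator (fun t => ENNReal.ofReal ((t - s) ^ (α - 1))) t :=
        setLIntegral_le_lintegral _ _
    _ = ∫⁻ t in Ioo s (s + 1), ENNReal.ofReal ((t - s) ^ (α - 1)) :=
        lintegral_indicator measurableSet_Ioo _
    _ = ENNReal.ofReal (1 / α) := near_slice_s hα0 s

lemma kerF_sq_slice {α : ℝ} (hα : α < 1/2) (t : ℝ) :
    ∫⁻ s, kerF α (t, s) ^ (2:ℝ) ≤ ENNReal.ofReal (-1 / ((α - 1) * 2 + 1)) := by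
  have hγ : (α - 1) * 2 < -1 := by linarith
  calc ∫⁻ s, kerF α (t, s) ^ (2:ℝ)
      ≤ ∫⁻ s, (Iic (t - 1)).indicator (fun s => ENNReal.ofReal ((t - s) ^ ((α - 1) * 2))) s :=
        lintegral_mono fun s => kerF_sq_le_indicator α t s
    _ = ∫⁻ s in Iic (t - 1), ENNReal.ofReal ((t - s) ^ ((α - 1) * 2)) :=
        lintegral_indicator measurableSet_Iic _
    _ = ENNReal.ofReal (-1 / ((α - 1) * 2 + 1)) := far_slice hγ t

lemma pospow_mul_eq_indicator_Iio (α t : ℝ) (φ : ℝ → ℝ) :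
    (fun s => pospow (t - s) (α - 1) * φ s)
      = (Set.Iio t).indicator (fun s => (t - s) ^ (α - 1) * φ s) := by
  funext s
  by_cases h : s < t
  · rw [indicator_of_mem (mem_Iio.mpr h)]
    unfold pospow
    rw [if_pos (by linarith)]
  · rw [indicator_of_notMem (by simpa using h)]
    unfold pospow
    rw [if_neg (by intro hc; exact h (by linarith)), zero_mul]

lemma pospow_mul_eq_indicator_Ioi (α s : ℝ) (φ : ℝ → ℝ) :
    (fun r => pospow (r - s) (α - 1) * φ r)
      = (Set.Ioi s).indicator (fun r => (r - s) ^ (α - 1) * φ r) := by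
  funext r
  by_cases h : s < r
  · rw [indicator_of_mem (mem_Ioi.mpr h)]
    unfold pospow
    rw [if_pos (by linarith)]
  · rw [indicator_of_notMem (by simpa using h)]
    unfold pospow
    rw [if_neg (by intro hc; exact h (by linarith)), zero_mul]

end FracIBP

open FracIBP

theorem Iplus_fractional_integration_by_parts (α : ℝ) (hα : α ∈ Set.Ioo (0:ℝ) (1/2))
    (a b : ℝ) (hab : a < b) (f g : ℝ → ℝ)
    (hf : MemLp f 2 (volume.restrict (Set.Ioo a b))) (hg : MemLp g 2 volume) :
    (∫⁻ t in Set.Ioo a b, ∫⁻ s : ℝ,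
        ENNReal.ofReal (|f t| * pospow (t - s) (α - 1) * |g s|)) < ⊤ ∧
    ∫ t in Set.Ioo a b, f t * Iplus α g t
      = ∫ s : ℝ, Iminus α (Set.indicator (Set.Ioo a b) f) s * g s := by
  obtain ⟨hα0, hαh⟩ := hα
  have hpq : Real.HolderConjugate 2 2 := Real.holderConjugate_iff.mpr ⟨one_lt_two, by norm_num⟩
  set μ : Measure ℝ := volume.restrict (Set.Ioo a b) with hμdef
  haveI : IsFiniteMeasure μ := by
    constructor
    rw [hμdef, Measure.restrict_apply_univ, Real.volume_Ioo]
    exact ENNReal.ofReal_lt_top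
  set ρ : Measure (ℝ × ℝ) := μ.prod volume with hρdef
  -- measurability facts
  have hfae : AEMeasurable f μ := hf.aestronglyMeasurable.aemeasurable
  have hgae : AEMeasurable g (volume : Measure ℝ) := hg.aestronglyMeasurable.aemeasurable
  have hfP : AEMeasurable (fun z : ℝ × ℝ => f z.1) ρ :=
    hfae.comp_quasiMeasurePreserving Measure.quasiMeasurePreserving_fst
  have hgP : AEMeasurable (fun z : ℝ × ℝ => g z.2) ρ :=
    hgae.comp_quasiMeasurePreserving Measure.quasiMeasurePreserving_snd
  have hfPn : AEMeasurable (fun z : ℝ × ℝ => (‖f z.1‖₊ : ℝ≥0∞)) ρ :=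
    hfP.aestronglyMeasurable.enorm
  have hgPn : AEMeasurable (fun z : ℝ × ℝ => (‖g z.2‖₊ : ℝ≥0∞)) ρ :=
    hgP.aestronglyMeasurable.enorm
  -- finiteness of L² norms
  have hG2 : (∫⁻ s, (‖g s‖₊ : ℝ≥0∞) ^ (2:ℝ)) < ⊤ := by
    have h := hg.2
    rw [eLpNorm_eq_lintegral_rpow_enorm_toReal (by norm_num) (by norm_num)] at h
    have h2 : ((2:ℝ≥0∞).toReal) = (2:ℝ) := by norm_num
    rw [h2] at h
    exact (ENNReal.rpow_lt_top_iff_of_pos (by norm_num : (0:ℝ) < 1/2)).mp h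
  have hF2 : (∫⁻ t, (‖f t‖₊ : ℝ≥0∞) ^ (2:ℝ) ∂μ) < ⊤ := by
    have h := hf.2
    rw [eLpNorm_eq_lintegral_rpow_enorm_toReal (by norm_num) (by norm_num)] at h
    have h2 : ((2:ℝ≥0∞).toReal) = (2:ℝ) := by norm_num
    rw [h2] at h
    exact (ENNReal.rpow_lt_top_iff_of_pos (by norm_num : (0:ℝ) < 1/2)).mp h
  have hfint : Integrable f μ :=
    memLp_one_iff_integrable.mp (hf.mono_exponent (by norm_num))
  have hF1 : (∫⁻ t, (‖f t‖₊ : ℝ≥0∞) ∂μ) < ⊤ := hfint.2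
  -- near-diagonal estimate
  have hnear : (∫⁻ z, (‖f z.1‖₊ : ℝ≥0∞) * kerN α z * ‖g z.2‖₊ ∂ρ) < ⊤ := by
    have hsplit : ∀ z : ℝ × ℝ, (‖f z.1‖₊ : ℝ≥0∞) * kerN α z * ‖g z.2‖₊
        = ((fun z : ℝ × ℝ => (‖f z.1‖₊ : ℝ≥0∞) * kerN α z ^ (1/2:ℝ)) *
           (fun z : ℝ × ℝ => kerN α z ^ (1/2:ℝ) * (‖g z.2‖₊ : ℝ≥0∞))) z := by
      intro z
      simp only [Pi.mul_apply]
      have hh : kerN α z ^ (1/2:ℝ) * kerN α z ^ (1/2:ℝ) = kerN α z := by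
        rw [← ENNReal.rpow_add_of_nonneg _ _ (by norm_num) (by norm_num)]
        norm_num
      calc (‖f z.1‖₊ : ℝ≥0∞) * kerN α z * ‖g z.2‖₊
          = (‖f z.1‖₊ : ℝ≥0∞) * (kerN α z ^ (1/2:ℝ) * kerN α z ^ (1/2:ℝ)) * ‖g z.2‖₊ := by
            rw [hh]
        _ = _ := by ring
    have hum : AEMeasurable (fun z : ℝ × ℝ => (‖f z.1‖₊ : ℝ≥0∞) * kerN α z ^ (1/2:ℝ)) ρ :=
      hfPn.mul ((measurable_kerN α).pow_const _).aemeasurable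
    have hvm : AEMeasurable (fun z : ℝ × ℝ => kerN α z ^ (1/2:ℝ) * (‖g z.2‖₊ : ℝ≥0∞)) ρ :=
      ((measurable_kerN α).pow_const _).aemeasurable.mul hgPn
    have hH := ENNReal.lintegral_mul_le_Lp_mul_Lq ρ hpq hum hvm
    have hsq1 : ∀ z : ℝ × ℝ, ((‖f z.1‖₊ : ℝ≥0∞) * kerN α z ^ (1/2:ℝ)) ^ (2:ℝ)
        = (‖f z.1‖₊ : ℝ≥0∞) ^ (2:ℝ) * kerN α z := by
      intro z
      rw [ENNReal.mul_rpow_of_nonneg _ _ (by norm_num : (0:ℝ) ≤ 2), ← ENNReal.rpow_mul]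
      norm_num
    have hsq2 : ∀ z : ℝ × ℝ, (kerN α z ^ (1/2:ℝ) * (‖g z.2‖₊ : ℝ≥0∞)) ^ (2:ℝ)
        = kerN α z * (‖g z.2‖₊ : ℝ≥0∞) ^ (2:ℝ) := by
      intro z
      rw [ENNReal.mul_rpow_of_nonneg _ _ (by norm_num : (0:ℝ) ≤ 2), ← ENNReal.rpow_mul]
      norm_num
    have hI1 : (∫⁻ z, ((‖f z.1‖₊ : ℝ≥0∞) * kerN α z ^ (1/2:ℝ)) ^ (2:ℝ) ∂ρ)
        ≤ ENNReal.ofReal (1/α) * (∫⁻ t, (‖f t‖₊ : ℝ≥0∞) ^ (2:ℝ) ∂μ) := by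
      calc ∫⁻ z, ((‖f z.1‖₊ : ℝ≥0∞) * kerN α z ^ (1/2:ℝ)) ^ (2:ℝ) ∂ρ
          = ∫⁻ z, (‖f z.1‖₊ : ℝ≥0∞) ^ (2:ℝ) * kerN α z ∂ρ := lintegral_congr hsq1
        _ = ∫⁻ t, ∫⁻ s, (‖f t‖₊ : ℝ≥0∞) ^ (2:ℝ) * kerN α (t, s) ∂volume ∂μ :=
            lintegral_prod _ ((hfPn.pow_const _).mul (measurable_kerN α).aemeasurable)
        _ = ∫⁻ t, ((‖f t‖₊ : ℝ≥0∞) ^ (2:ℝ) * ∫⁻ s, kerN α (t, s)) ∂μ :=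
            lintegral_congr fun t =>
              lintegral_const_mul _
                (show Measurable fun s => kerN α (t, s) from
                  (measurable_kerN α).comp measurable_prodMk_left)
        _ ≤ ∫⁻ t, (‖f t‖₊ : ℝ≥0∞) ^ (2:ℝ) * ENNReal.ofReal (1/α) ∂μ :=
            lintegral_mono fun t => mul_le_mul_right (kerN_slice_t hα0 t) _
        _ = ENNReal.ofReal (1/α) * ∫⁻ t, (‖f t‖₊ : ℝ≥0∞) ^ (2:ℝ) ∂μ := by
            rw [lintegral_mul_const'' _ (show AEMeasurable (fun t => (‖f t‖₊ : ℝ≥0∞) ^ (2:ℝ)) μ from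
                hfae.aestronglyMeasurable.enorm.pow_const _),
              mul_comm]
    have hI2 : (∫⁻ z, (kerN α z ^ (1/2:ℝ) * (‖g z.2‖₊ : ℝ≥0∞)) ^ (2:ℝ) ∂ρ)
        ≤ ENNReal.ofReal (1/α) * (∫⁻ s, (‖g s‖₊ : ℝ≥0∞) ^ (2:ℝ)) := by
      calc ∫⁻ z, (kerN α z ^ (1/2:ℝ) * (‖g z.2‖₊ : ℝ≥0∞)) ^ (2:ℝ) ∂ρ
          = ∫⁻ z, kerN α z * (‖g z.2‖₊ : ℝ≥0∞) ^ (2:ℝ) ∂ρ := lintegral_congr hsq2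
        _ = ∫⁻ s, ∫⁻ t, kerN α (t, s) * (‖g s‖₊ : ℝ≥0∞) ^ (2:ℝ) ∂μ ∂volume :=
            lintegral_prod_symm _ ((measurable_kerN α).aemeasurable.mul (hgPn.pow_const _))
        _ = ∫⁻ s, (∫⁻ t, kerN α (t, s) ∂μ) * (‖g s‖₊ : ℝ≥0∞) ^ (2:ℝ) ∂volume :=
            lintegral_congr fun s =>
              lintegral_mul_const _
                (show Measurable fun t => kerN α (t, s) from
                  (measurable_kerN α).comp measurable_prodMk_right)
        _ ≤ ∫⁻ s, ENNReal.ofReal (1/α) * (‖g s‖₊ : ℝ≥0∞) ^ (2:ℝ) ∂volume := by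
            refine lintegral_mono fun s => mul_le_mul_left ?_ _
            exact kerN_slice_s hα0 (Set.Ioo a b) s
        _ = ENNReal.ofReal (1/α) * ∫⁻ s, (‖g s‖₊ : ℝ≥0∞) ^ (2:ℝ) :=
            lintegral_const_mul'' _ (hgae.aestronglyMeasurable.enorm.pow_const _)
    have hfin1 : ENNReal.ofReal (1/α) * (∫⁻ t, (‖f t‖₊ : ℝ≥0∞) ^ (2:ℝ) ∂μ) < ⊤ :=
      ENNReal.mul_lt_top ENNReal.ofReal_lt_top hF2
    have hfin2 : ENNReal.ofReal (1/α) * (∫⁻ s, (‖g s‖₊ : ℝ≥0∞) ^ (2:ℝ)) < ⊤ :=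
      ENNReal.mul_lt_top ENNReal.ofReal_lt_top hG2
    calc ∫⁻ z, (‖f z.1‖₊ : ℝ≥0∞) * kerN α z * ‖g z.2‖₊ ∂ρ
        = ∫⁻ z, ((fun z : ℝ × ℝ => (‖f z.1‖₊ : ℝ≥0∞) * kerN α z ^ (1/2:ℝ)) *
            (fun z : ℝ × ℝ => kerN α z ^ (1/2:ℝ) * (‖g z.2‖₊ : ℝ≥0∞))) z ∂ρ :=
          lintegral_congr hsplit
      _ ≤ (∫⁻ z, ((‖f z.1‖₊ : ℝ≥0∞) * kerN α z ^ (1/2:ℝ)) ^ (2:ℝ) ∂ρ) ^ (1/(2:ℝ)) *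
          (∫⁻ z, (kerN α z ^ (1/2:ℝ) * (‖g z.2‖₊ : ℝ≥0∞)) ^ (2:ℝ) ∂ρ) ^ (1/(2:ℝ)) := hH
      _ < ⊤ := by
          apply ENNReal.mul_lt_top
          · exact ENNReal.rpow_lt_top_of_nonneg (by norm_num) (lt_of_le_of_lt hI1 hfin1).ne
          · exact ENNReal.rpow_lt_top_of_nonneg (by norm_num) (lt_of_le_of_lt hI2 hfin2).ne
  -- far estimate
  have hfar : (∫⁻ z, (‖f z.1‖₊ : ℝ≥0∞) * kerF α z * ‖g z.2‖₊ ∂ρ) < ⊤ := by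
    set D := (ENNReal.ofReal (-1 / ((α - 1) * 2 + 1))) ^ (1/(2:ℝ)) *
      (∫⁻ s, (‖g s‖₊ : ℝ≥0∞) ^ (2:ℝ)) ^ (1/(2:ℝ)) with hD
    have hDlt : D < ⊤ := by
      rw [hD]
      apply ENNReal.mul_lt_top
      · exact ENNReal.rpow_lt_top_of_nonneg (by norm_num) ENNReal.ofReal_ne_top
      · exact ENNReal.rpow_lt_top_of_nonneg (by norm_num) hG2.ne
    have hin : ∀ t : ℝ, (∫⁻ s, kerF α (t, s) * ‖g s‖₊) ≤ D := by
      intro t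
      have h := ENNReal.lintegral_mul_le_Lp_mul_Lq volume hpq
        (f := fun s => kerF α (t, s)) (g := fun s => (‖g s‖₊ : ℝ≥0∞))
        ((measurable_kerF α).comp measurable_prodMk_left).aemeasurable
        hg.aestronglyMeasurable.enorm
      refine le_trans h ?_
      rw [hD]
      exact mul_le_mul'
        (ENNReal.rpow_le_rpow (kerF_sq_slice hαh t) (by norm_num)) le_rfl
    calc ∫⁻ z, (‖f z.1‖₊ : ℝ≥0∞) * kerF α z * ‖g z.2‖₊ ∂ρ
        = ∫⁻ t, ∫⁻ s, (‖f t‖₊ : ℝ≥0∞) * kerF α (t, s) * ‖g s‖₊ ∂volume ∂μ :=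
          lintegral_prod _ ((hfPn.mul (measurable_kerF α).aemeasurable).mul hgPn)
      _ = ∫⁻ t, ((‖f t‖₊ : ℝ≥0∞) * ∫⁻ s, kerF α (t, s) * ‖g s‖₊) ∂μ := by
          refine lintegral_congr fun t => ?_
          simp_rw [mul_assoc]
          exact lintegral_const_mul'' _
            (((measurable_kerF α).comp measurable_prodMk_left).aemeasurable.mul
              hg.aestronglyMeasurable.enorm)
      _ ≤ ∫⁻ t, (‖f t‖₊ : ℝ≥0∞) * D ∂μ :=
          lintegral_mono fun t => mul_le_mul_right (hin t) _
      _ = D * ∫⁻ t, (‖f t‖₊ : ℝ≥0∞) ∂μ := by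
          rw [lintegral_mul_const'' _ (show AEMeasurable (fun t => (‖f t‖₊ : ℝ≥0∞)) μ from
            hfae.aestronglyMeasurable.enorm), mul_comm]
      _ < ⊤ := ENNReal.mul_lt_top hDlt hF1
  -- total
  have htot : (∫⁻ z, (‖f z.1‖₊ : ℝ≥0∞) * ker α z * ‖g z.2‖₊ ∂ρ) < ⊤ := by
    have hsp : ∀ z : ℝ × ℝ, (‖f z.1‖₊ : ℝ≥0∞) * ker α z * ‖g z.2‖₊
        = (‖f z.1‖₊ : ℝ≥0∞) * kerN α z * ‖g z.2‖₊
          + (‖f z.1‖₊ : ℝ≥0∞) * kerF α z * ‖g z.2‖₊ := by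
      intro z; rw [ker_split]; ring
    have e1 : (∫⁻ z, (‖f z.1‖₊ : ℝ≥0∞) * ker α z * ‖g z.2‖₊ ∂ρ)
        = (∫⁻ z, (‖f z.1‖₊ : ℝ≥0∞) * kerN α z * ‖g z.2‖₊ ∂ρ)
          + ∫⁻ z, (‖f z.1‖₊ : ℝ≥0∞) * kerF α z * ‖g z.2‖₊ ∂ρ := by
      rw [← lintegral_add_left' (f := fun z : ℝ × ℝ => (‖f z.1‖₊ : ℝ≥0∞) * kerN α z * ‖g z.2‖₊) ((hfPn.mul (measurable_kerN α).aemeasurable).mul hgPn)]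
      exact lintegral_congr hsp
    rw [e1]
    exact ENNReal.add_lt_top.mpr ⟨hnear, hfar⟩
  have hFtot : AEMeasurable (fun z : ℝ × ℝ => (‖f z.1‖₊ : ℝ≥0∞) * ker α z * ‖g z.2‖₊) ρ :=
    (hfPn.mul (measurable_ker α).aemeasurable).mul hgPn
  have hiter : (∫⁻ t in Set.Ioo a b, ∫⁻ s : ℝ,
        ENNReal.ofReal (|f t| * pospow (t - s) (α - 1) * |g s|))
      = ∫⁻ z, (‖f z.1‖₊ : ℝ≥0∞) * ker α z * ‖g z.2‖₊ ∂ρ := by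
    have e : ∀ t s : ℝ, ENNReal.ofReal (|f t| * pospow (t - s) (α - 1) * |g s|)
        = (‖f t‖₊ : ℝ≥0∞) * ker α (t, s) * (‖g s‖₊ : ℝ≥0∞) := by
      intro t s
      rw [ENNReal.ofReal_mul (mul_nonneg (abs_nonneg _) (pospow_nonneg _ _)),
        ENNReal.ofReal_mul (abs_nonneg _), ← enorm_eq_nnnorm, Real.enorm_eq_ofReal_abs,
        ← enorm_eq_nnnorm, Real.enorm_eq_ofReal_abs]
      rfl
    calc (∫⁻ t in Set.Ioo a b, ∫⁻ s : ℝ,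
          ENNReal.ofReal (|f t| * pospow (t - s) (α - 1) * |g s|))
        = ∫⁻ t, ∫⁻ s, (‖f t‖₊ : ℝ≥0∞) * ker α (t, s) * (‖g s‖₊ : ℝ≥0∞) ∂volume ∂μ :=
          lintegral_congr fun t => lintegral_congr fun s => e t s
      _ = ∫⁻ z, (‖f z.1‖₊ : ℝ≥0∞) * ker α z * ‖g z.2‖₊ ∂ρ :=
          lintegral_lintegral hFtot
  refine ⟨by rw [hiter]; exact htot, ?_⟩
  -- Part 2: the integration-by-parts identity
  set P : ℝ → ℝ → ℝ := fun t s => f t * pospow (t - s) (α - 1) * g s with hP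
  have hPmeas : AEMeasurable (Function.uncurry P) ρ :=
    (hfP.mul ((measurable_pospow (α - 1)).comp
        (measurable_fst.sub measurable_snd)).aemeasurable).mul hgP
  have hPint : Integrable (Function.uncurry P) ρ := by
    refine ⟨hPmeas.aestronglyMeasurable, ?_⟩
    have hnorm : ∀ z : ℝ × ℝ, (‖Function.uncurry P z‖₊ : ℝ≥0∞)
        = (‖f z.1‖₊ : ℝ≥0∞) * ker α z * ‖g z.2‖₊ := by
      intro z
      rw [← enorm_eq_nnnorm, Real.enorm_eq_ofReal_abs]
      have habs : |Function.uncurry P z| = |f z.1| * pospow (z.1 - z.2) (α - 1) * |g z.2| := by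
        show |f z.1 * pospow (z.1 - z.2) (α - 1) * g z.2| = _
        rw [abs_mul, abs_mul, abs_of_nonneg (pospow_nonneg _ _)]
      rw [habs, ENNReal.ofReal_mul (mul_nonneg (abs_nonneg _) (pospow_nonneg _ _)),
        ENNReal.ofReal_mul (abs_nonneg _), ← enorm_eq_nnnorm, Real.enorm_eq_ofReal_abs,
        ← enorm_eq_nnnorm, Real.enorm_eq_ofReal_abs]
      rfl
    exact lt_of_le_of_lt (le_of_eq (lintegral_congr hnorm)) htot
  have hswap := integral_integral_swap hPint
  have hLpt : ∀ t : ℝ, f t * Iplus α g t = (1 / Real.Gamma α) * ∫ s, P t s := by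
    intro t
    unfold Iplus
    have e1 : (∫ s in Set.Iio t, (t - s) ^ (α - 1) * g s)
        = ∫ s, pospow (t - s) (α - 1) * g s := by
      rw [pospow_mul_eq_indicator_Iio α t g, integral_indicator measurableSet_Iio]
    rw [e1, mul_left_comm]
    congr 1
    rw [← integral_const_mul]
    exact integral_congr_ae (ae_of_all _ fun s => by simp only [hP]; ring)
  have hRpt : ∀ s : ℝ, Iminus α (Set.indicator (Set.Ioo a b) f) s * g s
      = (1 / Real.Gamma α) * ∫ t, P t s ∂μ := by
    intro s
    unfold Iminus
    have e1 : (∫ r in Set.Ioi s, (r - s) ^ (α - 1) * Set.indicator (Set.Ioo a b) f r)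
        = ∫ r, pospow (r - s) (α - 1) * Set.indicator (Set.Ioo a b) f r := by
      rw [pospow_mul_eq_indicator_Ioi α s _, integral_indicator measurableSet_Ioi]
    have e2 : (fun r => pospow (r - s) (α - 1) * Set.indicator (Set.Ioo a b) f r)
        = Set.indicator (Set.Ioo a b) (fun r => pospow (r - s) (α - 1) * f r) := by
      funext r
      by_cases h : r ∈ Set.Ioo a b
      · simp [h]
      · simp [h]
    rw [e1, e2, integral_indicator measurableSet_Ioo, mul_assoc]
    congr 1
    rw [← integral_mul_const]
    exact integral_congr_ae (ae_of_all _ fun r => by simp only [hP]; ring)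
  calc ∫ t in Set.Ioo a b, f t * Iplus α g t
      = ∫ t, ((1 / Real.Gamma α) * ∫ s, P t s) ∂μ := integral_congr_ae (ae_of_all _ hLpt)
    _ = (1 / Real.Gamma α) * ∫ t, (∫ s, P t s) ∂μ := integral_const_mul _ _
    _ = (1 / Real.Gamma α) * ∫ s, (∫ t, P t s ∂μ) := by rw [hswap]
    _ = ∫ s, ((1 / Real.Gamma α) * ∫ t, P t s ∂μ) := (integral_const_mul _ _).symm
    _ = ∫ s : ℝ, Iminus α (Set.indicator (Set.Ioo a b) f) s * g s :=
        (integral_congr_ae (ae_of_all _ hRpt)).symm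
end

section
/- Let H ∈ (1/2, 1), t > 0 and s, s' ∈ [t, +∞). Define e_{s,t}(x₁, x₂) = ∫_0^t ∫_0^t (u - x₁)₊^{H/2 - 1} (v - x₂)₊^{H/2 - 1} |u - s|^{H-1} |v - s|^{H-1} du dv for (x₁, x₂) ∈ ℝ². Then e_{s,t}, e_{s',t} ∈ L²(ℝ²) and ∫_{ℝ²} e_{s,t}(x₁, x₂) e_{s',t}(x₁, x₂) dx₁ dx₂ = B(1-H, H/2)² · (K_t^2(s, s'))². -/
open MeasureTheory

/-- The kernel `K_t^2(s,r) = ∫_0^t ∫_0^t |s-u|^{H-1} |u-v|^{H-1} |v-r|^{H-1} du dv`. -/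
noncomputable def K2 (H t s r : ℝ) : ℝ :=
  ∫ u in (0:ℝ)..t, ∫ v in (0:ℝ)..t,
    |s - u| ^ (H - 1) * |u - v| ^ (H - 1) * |v - r| ^ (H - 1)

/-- The kernel `e_{s,t}(x₁,x₂)
  = ∫_0^t ∫_0^t (u-x₁)₊^{H/2-1} (v-x₂)₊^{H/2-1} |u-s|^{H-1} |v-s|^{H-1} du dv`. -/
noncomputable def eKer (H t s : ℝ) (x : ℝ × ℝ) : ℝ :=
  ∫ u in (0:ℝ)..t, ∫ v in (0:ℝ)..t,
    pospow (u - x.1) (H/2 - 1) * pospow (v - x.2) (H/2 - 1)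
      * |u - s| ^ (H - 1) * |v - s| ^ (H - 1)

open Set Real

/-! ### Auxiliary lemmas -/

section Aux

lemma pospow_nonneg (x γ : ℝ) : 0 ≤ pospow x γ := by
  unfold pospow; split
  · exact rpow_nonneg (by linarith) _
  · exact le_refl _

lemma measurable_pospow (γ : ℝ) : Measurable fun x => pospow x γ := by
  have h : (fun x => pospow x γ) = Set.indicator (Ioi 0) fun x : ℝ => x ^ γ := by
    funext x; simp [pospow, Set.indicator_apply, mem_Ioi]
  rw [h]
  exact (measurable_id.pow_const γ).indicator measurableSet_Ioi

lemma abs_rpow_intervalIntegrable (p : ℝ) (hp : -1 < p) (a b : ℝ) :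
    IntervalIntegrable (fun x => |x| ^ p) volume a b := by
  suffices h : ∀ c : ℝ, 0 ≤ c → IntervalIntegrable (fun x => |x| ^ p) volume 0 c by
    have h' : ∀ c : ℝ, IntervalIntegrable (fun x => |x| ^ p) volume 0 c := by
      intro c
      rcases le_total 0 c with hc | hc
      · exact h c hc
      · rw [IntervalIntegrable.iff_comp_neg]
        simpa using h (-c) (by linarith)
    exact (h' a).symm.trans (h' b)
  intro c hc
  rw [intervalIntegrable_iff, uIoc_of_le hc]
  have h2 := intervalIntegral.intervalIntegrable_rpow' (a := 0) (b := c) hp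
  rw [intervalIntegrable_iff, uIoc_of_le hc] at h2
  refine h2.congr_fun ?_ measurableSet_Ioc
  intro x hx
  show x ^ p = |x| ^ p
  rw [abs_of_pos hx.1]

lemma intervalIntegrable_abs_sub_rpow (p : ℝ) (hp : -1 < p) (c a b : ℝ) :
    IntervalIntegrable (fun x => |x - c| ^ p) volume a b := by
  simpa using (abs_rpow_intervalIntegrable p hp (a - c) (b - c)).comp_sub_right c

lemma integrableOn_abs_sub_rpow (p : ℝ) (hp : -1 < p) (c a b : ℝ) (hab : a ≤ b) :
    IntegrableOn (fun x => |x - c| ^ p) (Ioc a b) := by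
  have := intervalIntegrable_abs_sub_rpow p hp c a b
  rwa [intervalIntegrable_iff, uIoc_of_le hab] at this

/-- The Beta-type constant `∫_0^∞ z^α (1+z)^α dz`. -/
noncomputable def Cint (α : ℝ) : ℝ := ∫ z in Ioi (0:ℝ), z ^ α * (1 + z) ^ α

lemma Cint_nonneg (α : ℝ) : 0 ≤ Cint α :=
  setIntegral_nonneg measurableSet_Ioi fun z hz =>
    mul_nonneg (rpow_nonneg (le_of_lt hz) _) (rpow_nonneg (by linarith [mem_Ioi.1 hz]) _)

lemma integrableOn_shift_rpow {α : ℝ} (hα1 : -1 < α) (hα2 : α < -1/2) {c : ℝ} (hc : 0 < c) :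
    IntegrableOn (fun y => y ^ α * (y + c) ^ α) (Ioi (0:ℝ)) := by
  have hmeas : Measurable fun y : ℝ => y ^ α * (y + c) ^ α :=
    (measurable_id.pow_const α).mul ((measurable_id.add_const c).pow_const α)
  have h1 : IntegrableOn (fun y => y ^ α * (y + c) ^ α) (Ioc (0:ℝ) 1) := by
    have hg : IntegrableOn (fun y : ℝ => y ^ α * c ^ α) (Ioc (0:ℝ) 1) := by
      have := intervalIntegral.intervalIntegrable_rpow' (a := 0) (b := 1) hα1
      rw [intervalIntegrable_iff, uIoc_of_le zero_le_one] at this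
      exact this.mul_const _
    refine Integrable.mono' hg (hmeas.aestronglyMeasurable.restrict) ?_
    filter_upwards [ae_restrict_mem measurableSet_Ioc] with y hy
    rw [Real.norm_eq_abs, abs_mul, abs_of_nonneg (rpow_nonneg hy.1.le _),
      abs_of_nonneg (rpow_nonneg (by linarith [hy.1] : (0:ℝ) ≤ y + c) _)]
    exact mul_le_mul_of_nonneg_left
      (rpow_le_rpow_of_nonpos hc (by linarith [hy.1.le]) (by linarith)) (rpow_nonneg hy.1.le _)
  have h2 : IntegrableOn (fun y => y ^ α * (y + c) ^ α) (Ioi (1:ℝ)) := by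
    have hg : IntegrableOn (fun y : ℝ => y ^ (α + α)) (Ioi (1:ℝ)) :=
      integrableOn_Ioi_rpow_of_lt (by linarith) zero_lt_one
    refine Integrable.mono' hg (hmeas.aestronglyMeasurable.restrict) ?_
    filter_upwards [ae_restrict_mem measurableSet_Ioi] with y hy
    have hy0 : (0:ℝ) < y := lt_trans zero_lt_one hy
    rw [Real.norm_eq_abs, abs_mul, abs_of_nonneg (rpow_nonneg hy0.le _),
      abs_of_nonneg (rpow_nonneg (by linarith : (0:ℝ) ≤ y + c) _), rpow_add hy0]
    exact mul_le_mul_of_nonneg_left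
      (rpow_le_rpow_of_nonpos hy0 (by linarith) (by linarith)) (rpow_nonneg hy0.le _)
  have : Ioi (0:ℝ) = Ioc 0 1 ∪ Ioi 1 := (Ioc_union_Ioi_eq_Ioi zero_le_one).symm
  rw [this]
  exact h1.union h2

lemma integral_shift_rpow {α : ℝ} {c : ℝ} (hc : 0 < c) :
    ∫ y in Ioi (0:ℝ), y ^ α * (y + c) ^ α = c ^ (2*α+1) * Cint α := by
  have key := integral_comp_mul_left_Ioi (fun y => y ^ α * (y + c) ^ α) 0 hc
  rw [mul_zero] at key
  have congr1 : ∫ z in Ioi (0:ℝ), (c * z) ^ α * (c * z + c) ^ α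
      = ∫ z in Ioi (0:ℝ), c ^ (α + α) * (z ^ α * (1 + z) ^ α) := by
    refine setIntegral_congr_fun measurableSet_Ioi (fun z hz => ?_)
    have hz0 : (0:ℝ) < z := hz
    have h1 : c * z + c = c * (1 + z) := by ring
    rw [h1, mul_rpow hc.le hz0.le, mul_rpow hc.le (by linarith : (0:ℝ) ≤ 1 + z),
      rpow_add hc]
    ring
  rw [congr1, integral_const_mul] at key
  have hc' : c ^ (α + α) * Cint α = c⁻¹ * ∫ y in Ioi (0:ℝ), y ^ α * (y + c) ^ α := key
  have h2 : c ^ (2*α+1) = c * c ^ (α + α) := by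
    rw [show (2*α+1) = (α+α)+1 by ring, rpow_add hc, rpow_one]; ring
  rw [h2]
  field_simp at hc' ⊢
  rw [← hc']

lemma Cint_eq {α : ℝ} (hα : α ≠ 0) : Cint α = eulerBeta (-(2*α+1)) (α+1) := by
  have himg : (fun w : ℝ => w⁻¹ - 1) '' Ioo 0 1 = Ioi 0 := by
    ext z; constructor
    · rintro ⟨w, hw, rfl⟩
      have : (1:ℝ) < w⁻¹ := (one_lt_inv₀ hw.1).2 hw.2
      exact mem_Ioi.2 (by linarith)
    · intro hz
      have hz' : (0:ℝ) < z := hz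
      refine ⟨(1+z)⁻¹, ⟨by positivity, ?_⟩, ?_⟩
      · rw [inv_lt_one_iff₀]; right; linarith
      · show ((1+z)⁻¹)⁻¹ - 1 = z
        rw [inv_inv]; ring
  have hderiv : ∀ w ∈ Ioo (0:ℝ) 1, HasDerivWithinAt (fun w : ℝ => w⁻¹ - 1)
      (-(w^2)⁻¹) (Ioo 0 1) w := fun w hw =>
    ((hasDerivAt_inv hw.1.ne').sub_const 1).hasDerivWithinAt
  have hinj : InjOn (fun w : ℝ => w⁻¹ - 1) (Ioo 0 1) := by
    intro w1 h1 w2 h2 h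
    have : w1⁻¹ = w2⁻¹ := by dsimp at h; linarith
    exact inv_injective this
  have key := integral_image_eq_integral_abs_deriv_smul measurableSet_Ioo hderiv hinj
    (fun z => z ^ α * (1 + z) ^ α)
  rw [himg] at key
  unfold Cint eulerBeta
  rw [key, intervalIntegral.integral_of_le zero_le_one, ← integral_Ioc_eq_integral_Ioo]
  refine setIntegral_congr_fun measurableSet_Ioc (fun w hw => ?_)
  have hw0 : (0:ℝ) < w := hw.1
  show |(-(w^2)⁻¹)| • ((w⁻¹ - 1) ^ α * (1 + (w⁻¹ - 1)) ^ α)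
      = w ^ (-(2*α+1) - 1) * (1 - w) ^ (α + 1 - 1)
  rcases eq_or_lt_of_le hw.2 with h1 | h1
  · subst h1
    norm_num [zero_rpow hα]
  · have hw1' : (0:ℝ) < 1 - w := by linarith
    have e1 : w⁻¹ - 1 = (1 - w)/w := by field_simp
    have e2 : 1 + (w⁻¹ - 1) = w⁻¹ := by ring
    rw [e2, e1, div_rpow hw1'.le hw0.le, abs_neg,
      abs_of_nonneg (inv_nonneg.2 (sq_nonneg w)), smul_eq_mul,
      inv_rpow hw0.le, ← rpow_neg hw0.le, div_eq_mul_inv, ← rpow_neg hw0.le,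
      show ((w^2)⁻¹ : ℝ) = w ^ (-2 : ℝ) by
        rw [← rpow_natCast w 2, ← rpow_neg hw0.le]; norm_num,
      show -(2*α+1) - 1 = (-2) + (-α + -α) by ring,
      rpow_add hw0, rpow_add hw0, add_sub_cancel_right]
    ring

lemma pospow_mul_eq_indicator {α u v : ℝ} (huv : u < v) :
    (fun x => pospow (u - x) α * pospow (v - x) α)
      = Set.indicator (Iio u) (fun x => (u - x) ^ α * (v - x) ^ α) := by
  funext x
  rcases lt_or_ge x u with hx | hx
  · rw [Set.indicator_of_mem (mem_Iio.2 hx)]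
    have h1 : 0 < u - x := by linarith
    have h2 : 0 < v - x := by linarith
    simp [pospow, h1, h2]
  · rw [Set.indicator_of_notMem (by simp [hx, not_lt])]
    have h1 : ¬ (0 < u - x) := by simp; linarith
    simp [pospow, h1]

lemma image_sub_Ioi (u : ℝ) : (fun y : ℝ => u - y) '' Ioi 0 = Iio u := by
  ext x; constructor
  · rintro ⟨y, hy, rfl⟩
    have : (0:ℝ) < y := hy
    exact mem_Iio.2 (by dsimp; linarith)
  · intro hx
    have : x < u := hx
    exact ⟨u - x, mem_Ioi.2 (by linarith), by dsimp; ring⟩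

lemma key_aux {α u v : ℝ} (huv : u < v) :
    IntegrableOn (fun x => (u - x) ^ α * (v - x) ^ α) (Iio u)
      ↔ IntegrableOn (fun y => y ^ α * (y + (v - u)) ^ α) (Ioi (0:ℝ)) := by
  have hderiv : ∀ y ∈ Ioi (0:ℝ), HasDerivWithinAt (fun y : ℝ => u - y) (-1) (Ioi 0) y :=
    fun y _ => ((hasDerivAt_id y).const_sub u).hasDerivWithinAt
  have hinj : InjOn (fun y : ℝ => u - y) (Ioi 0) := fun y1 _ y2 _ h => by
    dsimp at h; linarith
  have := integrableOn_image_iff_integrableOn_abs_deriv_smul measurableSet_Ioi hderiv hinj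
    (fun x => (u - x) ^ α * (v - x) ^ α)
  rw [image_sub_Ioi] at this
  rw [this]
  constructor <;> intro h <;> refine h.congr_fun (fun y hy => ?_) measurableSet_Ioi
  · show |(-1:ℝ)| • ((u - (u - y)) ^ α * (v - (u - y)) ^ α) = y ^ α * (y + (v - u)) ^ α
    rw [show u - (u - y) = y by ring, show v - (u - y) = y + (v - u) by ring]
    simp
  · show y ^ α * (y + (v - u)) ^ α = |(-1:ℝ)| • ((u - (u - y)) ^ α * (v - (u - y)) ^ α)
    rw [show u - (u - y) = y by ring, show v - (u - y) = y + (v - u) by ring]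
    simp

lemma key_integrable {α : ℝ} (hα1 : -1 < α) (hα2 : α < -1/2) {u v : ℝ} (huv : u < v) :
    Integrable (fun x => pospow (u - x) α * pospow (v - x) α) := by
  rw [pospow_mul_eq_indicator huv]
  rw [integrable_indicator_iff measurableSet_Iio]
  exact (key_aux huv).2 (integrableOn_shift_rpow hα1 hα2 (by linarith))

lemma key_integral_lt {α : ℝ} {u v : ℝ} (huv : u < v) :
    ∫ x, pospow (u - x) α * pospow (v - x) α = (v - u) ^ (2*α+1) * Cint α := by
  rw [pospow_mul_eq_indicator huv, integral_indicator measurableSet_Iio]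
  have hderiv : ∀ y ∈ Ioi (0:ℝ), HasDerivWithinAt (fun y : ℝ => u - y) (-1) (Ioi 0) y :=
    fun y _ => ((hasDerivAt_id y).const_sub u).hasDerivWithinAt
  have hinj : InjOn (fun y : ℝ => u - y) (Ioi 0) := fun y1 _ y2 _ h => by
    dsimp at h; linarith
  have key := integral_image_eq_integral_abs_deriv_smul measurableSet_Ioi hderiv hinj
    (fun x => (u - x) ^ α * (v - x) ^ α)
  rw [image_sub_Ioi] at key
  rw [key, ← integral_shift_rpow (by linarith : (0:ℝ) < v - u)]
  refine setIntegral_congr_fun measurableSet_Ioi (fun y hy => ?_)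
  show |(-1:ℝ)| • ((u - (u - y)) ^ α * (v - (u - y)) ^ α) = y ^ α * (y + (v - u)) ^ α
  rw [show u - (u - y) = y by ring, show v - (u - y) = y + (v - u) by ring]
  simp

lemma key_integral {α : ℝ} {u v : ℝ} (huv : u ≠ v) :
    ∫ x, pospow (u - x) α * pospow (v - x) α = |u - v| ^ (2*α+1) * Cint α := by
  rcases lt_or_gt_of_ne huv with h | h
  · rw [key_integral_lt h, abs_of_neg (by linarith : u - v < 0), neg_sub]
  · rw [show (fun x => pospow (u - x) α * pospow (v - x) α)
        = fun x => pospow (v - x) α * pospow (u - x) α by funext x; ring]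
    rw [key_integral_lt h, abs_of_pos (by linarith : 0 < u - v)]

lemma key_integrable' {α : ℝ} (hα1 : -1 < α) (hα2 : α < -1/2) {u v : ℝ} (huv : u ≠ v) :
    Integrable (fun x => pospow (u - x) α * pospow (v - x) α) := by
  rcases lt_or_gt_of_ne huv with h | h
  · exact key_integrable hα1 hα2 h
  · rw [show (fun x => pospow (u - x) α * pospow (v - x) α)
        = fun x => pospow (v - x) α * pospow (u - x) α by funext x; ring]
    exact key_integrable hα1 hα2 h

lemma lint_shift_bound {p : ℝ} (hp : -1 < p) {t : ℝ} (ht : 0 < t) {u : ℝ}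
    (hu : u ∈ Icc (0:ℝ) t) :
    ∫⁻ v in Ioc (0:ℝ) t, ENNReal.ofReal (|v - u| ^ p)
      ≤ ∫⁻ z in Ioc (-t) t, ENNReal.ofReal (|z| ^ p) := by
  have hmeas : Measurable fun v : ℝ => ENNReal.ofReal (|v - u| ^ p) :=
    (((measurable_id.sub_const u).abs).pow_const p).ennreal_ofReal
  have h1 : Ioc (0:ℝ) t ⊆ Ioc (u - t) (u + t) := by
    intro v hv; exact ⟨by linarith [hv.1, hu.2], by linarith [hv.2, hu.1]⟩
  calc ∫⁻ v in Ioc (0:ℝ) t, ENNReal.ofReal (|v - u| ^ p)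
      ≤ ∫⁻ v in Ioc (u - t) (u + t), ENNReal.ofReal (|v - u| ^ p) :=
        lintegral_mono' (Measure.restrict_mono h1 le_rfl) le_rfl
    _ = ∫⁻ z in Ioc (-t) t, ENNReal.ofReal (|z| ^ p) := by
        have key := (measurePreserving_add_right (volume : Measure ℝ) u).setLIntegral_comp_preimage
          (measurableSet_Ioc (a := u - t) (b := u + t)) hmeas
        have hpre : (fun z : ℝ => z + u) ⁻¹' Ioc (u - t) (u + t) = Ioc (-t) t := by
          rw [Set.preimage_add_const_Ioc]; congr 1 <;> ring
        rw [hpre] at key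
        rw [← key]
        refine setLIntegral_congr_fun measurableSet_Ioc (fun z hz => ?_)
        simp

lemma lint_abs_lt_top {p : ℝ} (hp : -1 < p) {t : ℝ} (ht : 0 < t) :
    ∫⁻ z in Ioc (-t) t, ENNReal.ofReal (|z| ^ p) < ⊤ := by
  have := (integrableOn_abs_sub_rpow p hp 0 (-t) t (by linarith)).lintegral_lt_top
  simpa using this

end Aux

/-! ### The one-variable kernel `fker` -/

/-- The one-variable kernel `f_{s,t}(x) = ∫_0^t (u-x)₊^{H/2-1} |u-s|^{H-1} du`. -/
noncomputable def fker (H t s : ℝ) (x : ℝ) : ℝ :=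
  ∫ u in Ioc (0:ℝ) t, pospow (u - x) (H/2 - 1) * |u - s| ^ (H - 1)

lemma fker_nonneg (H t s : ℝ) (x : ℝ) : 0 ≤ fker H t s x :=
  integral_nonneg fun u => mul_nonneg (pospow_nonneg _ _) (rpow_nonneg (abs_nonneg _) _)

lemma fker_sm (H t s : ℝ) : StronglyMeasurable (fker H t s) := by
  have hm : Measurable fun p : ℝ × ℝ => pospow (p.2 - p.1) (H/2 - 1) * |p.2 - s| ^ (H - 1) :=
    ((measurable_pospow _).comp (measurable_snd.sub measurable_fst)).mul
      (((measurable_snd.sub_const s).abs).pow_const _)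
  exact hm.stronglyMeasurable.integral_prod_right'

lemma eKer_eq (H t s : ℝ) (ht : 0 ≤ t) (x : ℝ × ℝ) :
    eKer H t s x = fker H t s x.1 * fker H t s x.2 := by
  unfold eKer fker
  have h1 : ∀ u : ℝ, (∫ v in (0:ℝ)..t,
      pospow (u - x.1) (H/2 - 1) * pospow (v - x.2) (H/2 - 1)
        * |u - s| ^ (H - 1) * |v - s| ^ (H - 1))
      = (pospow (u - x.1) (H/2 - 1) * |u - s| ^ (H - 1))
        * ∫ v in (0:ℝ)..t, pospow (v - x.2) (H/2 - 1) * |v - s| ^ (H - 1) := by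
    intro u
    rw [← intervalIntegral.integral_const_mul]
    congr 1; funext v; ring
  simp only [h1]
  rw [intervalIntegral.integral_mul_const, intervalIntegral.integral_of_le ht,
    intervalIntegral.integral_of_le ht]

/-! ### The main Fubini computation -/

section Main

variable {H t s s' : ℝ}

lemma triple_meas (H s s' : ℝ) :
    Measurable (fun p : ℝ × ℝ => |p.1 - s| ^ (H-1) * |p.1 - p.2| ^ (H-1) * |p.2 - s'| ^ (H-1)) :=
  ((((measurable_fst.sub_const s).abs).pow_const _).mul
    (((measurable_fst.sub measurable_snd).abs).pow_const _)).mul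
    (((measurable_snd.sub_const s').abs).pow_const _)

lemma triple_nonneg (H s s' : ℝ) (p : ℝ × ℝ) :
    0 ≤ |p.1 - s| ^ (H-1) * |p.1 - p.2| ^ (H-1) * |p.2 - s'| ^ (H-1) :=
  mul_nonneg (mul_nonneg (rpow_nonneg (abs_nonneg _) _) (rpow_nonneg (abs_nonneg _) _))
    (rpow_nonneg (abs_nonneg _) _)

lemma triple_integrable (hH : H ∈ Set.Ioo (1/2:ℝ) 1) (ht : 0 < t) :
    Integrable (fun p : ℝ × ℝ => |p.1 - s| ^ (H-1) * |p.1 - p.2| ^ (H-1) * |p.2 - s'| ^ (H-1))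
      ((volume.restrict (Ioc (0:ℝ) t)).prod (volume.restrict (Ioc (0:ℝ) t))) := by
  obtain ⟨hH1, hH2⟩ := hH
  have h2q : (-1:ℝ) < (H-1)*2 := by linarith
  refine ⟨(triple_meas H s s').aestronglyMeasurable, ?_⟩
  rw [hasFiniteIntegral_iff_ofReal (ae_of_all _ (triple_nonneg H s s'))]
  have hsq : ∀ x : ℝ, (|x| ^ (H-1)) ^ 2 = |x| ^ ((H-1)*2) := fun x => by
    rw [← rpow_natCast (|x| ^ (H-1)) 2, ← rpow_mul (abs_nonneg _)]; norm_num
  have step1 : ∀ p : ℝ × ℝ,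
      ENNReal.ofReal (|p.1 - s| ^ (H-1) * |p.1 - p.2| ^ (H-1) * |p.2 - s'| ^ (H-1))
      ≤ ENNReal.ofReal (|p.1 - s| ^ ((H-1)*2) * |p.2 - s'| ^ ((H-1)*2))
        + ENNReal.ofReal (|p.1 - p.2| ^ ((H-1)*2)) := by
    intro p
    set A := |p.1 - s| ^ (H-1) with hA
    set B := |p.1 - p.2| ^ (H-1) with hB
    set C := |p.2 - s'| ^ (H-1) with hC
    have hA0 : 0 ≤ A := rpow_nonneg (abs_nonneg _) _
    have hB0 : 0 ≤ B := rpow_nonneg (abs_nonneg _) _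
    have hC0 : 0 ≤ C := rpow_nonneg (abs_nonneg _) _
    have h1 : A * B * C ≤ (A*C)^2 + B^2 := by nlinarith [sq_nonneg (A*C - B)]
    calc ENNReal.ofReal (A * B * C) ≤ ENNReal.ofReal ((A*C)^2 + B^2) :=
          ENNReal.ofReal_le_ofReal h1
      _ = ENNReal.ofReal ((A*C)^2) + ENNReal.ofReal (B^2) :=
          ENNReal.ofReal_add (by positivity) (by positivity)
      _ = _ := by
          rw [mul_pow, hsq, hsq, hsq]
  calc ∫⁻ p, ENNReal.ofReal (|p.1 - s| ^ (H-1) * |p.1 - p.2| ^ (H-1) * |p.2 - s'| ^ (H-1))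
        ∂((volume.restrict (Ioc (0:ℝ) t)).prod (volume.restrict (Ioc (0:ℝ) t)))
      ≤ ∫⁻ p, (ENNReal.ofReal (|p.1 - s| ^ ((H-1)*2) * |p.2 - s'| ^ ((H-1)*2))
          + ENNReal.ofReal (|p.1 - p.2| ^ ((H-1)*2)))
        ∂((volume.restrict (Ioc (0:ℝ) t)).prod (volume.restrict (Ioc (0:ℝ) t))) :=
        lintegral_mono step1
    _ < ⊤ := by
        rw [lintegral_add_left (by
          exact ((((measurable_fst.sub_const s).abs).pow_const _).mul
            (((measurable_snd.sub_const s').abs).pow_const _)).ennreal_ofReal)]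
        refine ENNReal.add_lt_top.2 ⟨?_, ?_⟩
        · have : ∀ p : ℝ × ℝ, ENNReal.ofReal (|p.1 - s| ^ ((H-1)*2) * |p.2 - s'| ^ ((H-1)*2))
              = ENNReal.ofReal (|p.1 - s| ^ ((H-1)*2)) * ENNReal.ofReal (|p.2 - s'| ^ ((H-1)*2)) :=
            fun p => ENNReal.ofReal_mul (rpow_nonneg (abs_nonneg _) _)
          simp only [this]
          have m1 : Measurable fun u : ℝ => ENNReal.ofReal (|u - s| ^ ((H-1)*2)) :=
            (((measurable_id.sub_const s).abs).pow_const _).ennreal_ofReal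
          have m2 : Measurable fun v : ℝ => ENNReal.ofReal (|v - s'| ^ ((H-1)*2)) :=
            (((measurable_id.sub_const s').abs).pow_const _).ennreal_ofReal
          rw [lintegral_prod_mul m1.aemeasurable m2.aemeasurable]
          exact ENNReal.mul_lt_top
            (integrableOn_abs_sub_rpow _ h2q s 0 t ht.le).lintegral_lt_top
            (integrableOn_abs_sub_rpow _ h2q s' 0 t ht.le).lintegral_lt_top
        · rw [lintegral_prod (fun p : ℝ × ℝ => ENNReal.ofReal (|p.1 - p.2| ^ ((H-1)*2))) (((((measurable_fst.sub measurable_snd).abs).pow_const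
            _).ennreal_ofReal).aemeasurable)]
          have hM := lint_abs_lt_top h2q ht
          calc ∫⁻ u in Ioc (0:ℝ) t, ∫⁻ v in Ioc (0:ℝ) t, ENNReal.ofReal (|u - v| ^ ((H-1)*2))
              ≤ ∫⁻ _ in Ioc (0:ℝ) t, ∫⁻ z in Ioc (-t) t, ENNReal.ofReal (|z| ^ ((H-1)*2)) := by
                refine setLIntegral_mono measurable_const (fun u hu => ?_)
                have : ∀ v : ℝ, |u - v| = |v - u| := fun v => abs_sub_comm _ _
                simp only [this]
                exact lint_shift_bound h2q ht ⟨hu.1.le, hu.2⟩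
            _ = (∫⁻ z in Ioc (-t) t, ENNReal.ofReal (|z| ^ ((H-1)*2))) * volume (Ioc (0:ℝ) t) :=
                setLIntegral_const _ _
            _ < ⊤ := ENNReal.mul_lt_top hM (by simp [Real.volume_Ioc])

lemma diag_null (t : ℝ) :
    ((volume.restrict (Ioc (0:ℝ) t)).prod (volume.restrict (Ioc (0:ℝ) t)))
      {p : ℝ × ℝ | p.1 = p.2} = 0 := by
  have hD : MeasurableSet {p : ℝ × ℝ | p.1 = p.2} :=
    measurableSet_eq_fun measurable_fst measurable_snd
  rw [Measure.prod_apply hD]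
  have h1 : ∀ u : ℝ, (Prod.mk u ⁻¹' {p : ℝ × ℝ | p.1 = p.2}) = {u} := by
    intro u; ext v; simp [eq_comm]
  have h2 : ∀ u : ℝ, (volume.restrict (Ioc (0:ℝ) t)) {u} = 0 := by
    intro u
    rw [Measure.restrict_apply (measurableSet_singleton u)]
    exact measure_mono_null inter_subset_left (volume_singleton)
  simp only [h1, h2, lintegral_zero]

lemma ae_offdiag (t : ℝ) :
    ∀ᵐ p : ℝ × ℝ ∂((volume.restrict (Ioc (0:ℝ) t)).prod (volume.restrict (Ioc (0:ℝ) t))),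
      p.1 ≠ p.2 := by
  rw [ae_iff]
  convert diag_null t using 2
  ext p; simp

lemma W_meas (H s s' : ℝ) : Measurable (fun z : ℝ × ℝ × ℝ =>
    (pospow (z.2.1 - z.1) (H/2-1) * |z.2.1 - s| ^ (H-1))
      * (pospow (z.2.2 - z.1) (H/2-1) * |z.2.2 - s'| ^ (H-1))) := by
  refine Measurable.mul (Measurable.mul ?_ ?_) (Measurable.mul ?_ ?_)
  · exact (measurable_pospow _).comp ((measurable_fst.comp measurable_snd).sub measurable_fst)
  · exact (((measurable_fst.comp measurable_snd).sub_const s).abs).pow_const _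
  · exact (measurable_pospow _).comp ((measurable_snd.comp measurable_snd).sub measurable_fst)
  · exact (((measurable_snd.comp measurable_snd).sub_const s').abs).pow_const _

lemma W_nonneg (H s s' : ℝ) (z : ℝ × ℝ × ℝ) : 0 ≤
    (pospow (z.2.1 - z.1) (H/2-1) * |z.2.1 - s| ^ (H-1))
      * (pospow (z.2.2 - z.1) (H/2-1) * |z.2.2 - s'| ^ (H-1)) :=
  mul_nonneg (mul_nonneg (pospow_nonneg _ _) (rpow_nonneg (abs_nonneg _) _))
    (mul_nonneg (pospow_nonneg _ _) (rpow_nonneg (abs_nonneg _) _))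

lemma inner_integrable (hH : H ∈ Set.Ioo (1/2:ℝ) 1) {p : ℝ × ℝ} (hp : p.1 ≠ p.2) :
    Integrable (fun x : ℝ => (pospow (p.1 - x) (H/2-1) * |p.1 - s| ^ (H-1))
      * (pospow (p.2 - x) (H/2-1) * |p.2 - s'| ^ (H-1))) := by
  have heq : (fun x : ℝ => (pospow (p.1 - x) (H/2-1) * |p.1 - s| ^ (H-1))
      * (pospow (p.2 - x) (H/2-1) * |p.2 - s'| ^ (H-1)))
      = fun x : ℝ => (|p.1 - s| ^ (H-1) * |p.2 - s'| ^ (H-1))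
        * (pospow (p.1 - x) (H/2-1) * pospow (p.2 - x) (H/2-1)) := by
    funext x; ring
  rw [heq]
  exact (key_integrable' (by linarith [hH.1] : (-1:ℝ) < H/2-1)
    (by linarith [hH.2] : H/2-1 < -1/2) hp).const_mul _

lemma inner_bochner (hH : H ∈ Set.Ioo (1/2:ℝ) 1) {p : ℝ × ℝ} (hp : p.1 ≠ p.2) :
    ∫ x : ℝ, (pospow (p.1 - x) (H/2-1) * |p.1 - s| ^ (H-1))
      * (pospow (p.2 - x) (H/2-1) * |p.2 - s'| ^ (H-1))
    = Cint (H/2-1) * (|p.1 - s| ^ (H-1) * |p.1 - p.2| ^ (H-1) * |p.2 - s'| ^ (H-1)) := by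
  have heq : (fun x : ℝ => (pospow (p.1 - x) (H/2-1) * |p.1 - s| ^ (H-1))
      * (pospow (p.2 - x) (H/2-1) * |p.2 - s'| ^ (H-1)))
      = fun x : ℝ => (|p.1 - s| ^ (H-1) * |p.2 - s'| ^ (H-1))
        * (pospow (p.1 - x) (H/2-1) * pospow (p.2 - x) (H/2-1)) := by
    funext x; ring
  rw [heq, integral_const_mul, key_integral hp,
    show 2*(H/2-1)+1 = H-1 by ring]
  ring

lemma inner_lint (hH : H ∈ Set.Ioo (1/2:ℝ) 1) {p : ℝ × ℝ} (hp : p.1 ≠ p.2) :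
    ∫⁻ x : ℝ, ENNReal.ofReal ((pospow (p.1 - x) (H/2-1) * |p.1 - s| ^ (H-1))
      * (pospow (p.2 - x) (H/2-1) * |p.2 - s'| ^ (H-1)))
    = ENNReal.ofReal (Cint (H/2-1))
      * ENNReal.ofReal (|p.1 - s| ^ (H-1) * |p.1 - p.2| ^ (H-1) * |p.2 - s'| ^ (H-1)) := by
  rw [← ofReal_integral_eq_lintegral_ofReal (inner_integrable hH hp)
    (ae_of_all _ fun x => W_nonneg H s s' (x, p)), inner_bochner hH hp,
    ENNReal.ofReal_mul (Cint_nonneg _)]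

lemma W_integrable (hH : H ∈ Set.Ioo (1/2:ℝ) 1) (ht : 0 < t) :
    Integrable (fun z : ℝ × ℝ × ℝ =>
      (pospow (z.2.1 - z.1) (H/2-1) * |z.2.1 - s| ^ (H-1))
        * (pospow (z.2.2 - z.1) (H/2-1) * |z.2.2 - s'| ^ (H-1)))
      ((volume : Measure ℝ).prod
        ((volume.restrict (Ioc (0:ℝ) t)).prod (volume.restrict (Ioc (0:ℝ) t)))) := by
  refine ⟨(W_meas H s s').aestronglyMeasurable, ?_⟩
  rw [hasFiniteIntegral_iff_ofReal (ae_of_all _ (W_nonneg H s s'))]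
  rw [lintegral_prod_symm _ ((W_meas H s s').ennreal_ofReal.aemeasurable)]
  have hcongr : ∀ᵐ p : ℝ × ℝ
      ∂((volume.restrict (Ioc (0:ℝ) t)).prod (volume.restrict (Ioc (0:ℝ) t))),
      (∫⁻ x : ℝ, ENNReal.ofReal ((pospow (p.1 - x) (H/2-1) * |p.1 - s| ^ (H-1))
        * (pospow (p.2 - x) (H/2-1) * |p.2 - s'| ^ (H-1))))
      = ENNReal.ofReal (Cint (H/2-1))
        * ENNReal.ofReal (|p.1 - s| ^ (H-1) * |p.1 - p.2| ^ (H-1) * |p.2 - s'| ^ (H-1)) := by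
    filter_upwards [ae_offdiag t] with p hp
    exact inner_lint hH hp
  rw [lintegral_congr_ae hcongr, lintegral_const_mul _ (triple_meas H s s').ennreal_ofReal]
  exact ENNReal.mul_lt_top ENNReal.ofReal_lt_top (triple_integrable hH ht).lintegral_lt_top

lemma fker_mul_eq (x : ℝ) :
    fker H t s x * fker H t s' x
      = ∫ p : ℝ × ℝ, (pospow (p.1 - x) (H/2-1) * |p.1 - s| ^ (H-1))
          * (pospow (p.2 - x) (H/2-1) * |p.2 - s'| ^ (H-1))
        ∂((volume.restrict (Ioc (0:ℝ) t)).prod (volume.restrict (Ioc (0:ℝ) t))) := by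
  have h2 : H / 2 - 1 = H/2-1 := rfl
  exact (integral_prod_mul (μ := volume.restrict (Ioc (0:ℝ) t))
    (ν := volume.restrict (Ioc (0:ℝ) t))
    (fun u => pospow (u - x) (H/2-1) * |u - s| ^ (H-1))
    (fun v => pospow (v - x) (H/2-1) * |v - s'| ^ (H-1))).symm

lemma K2_eq (hH : H ∈ Set.Ioo (1/2:ℝ) 1) (ht : 0 < t) :
    (∫ p : ℝ × ℝ, |p.1 - s| ^ (H-1) * |p.1 - p.2| ^ (H-1) * |p.2 - s'| ^ (H-1)
      ∂((volume.restrict (Ioc (0:ℝ) t)).prod (volume.restrict (Ioc (0:ℝ) t))))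
    = K2 H t s s' := by
  rw [integral_prod _ (triple_integrable hH ht)]
  unfold K2
  rw [intervalIntegral.integral_of_le ht.le]
  refine setIntegral_congr_fun measurableSet_Ioc (fun u hu => ?_)
  rw [intervalIntegral.integral_of_le ht.le]
  refine setIntegral_congr_fun measurableSet_Ioc (fun v hv => ?_)
  rw [abs_sub_comm s u]

lemma main_inner (hH : H ∈ Set.Ioo (1/2:ℝ) 1) (ht : 0 < t) :
    ∫ x : ℝ, fker H t s x * fker H t s' x = Cint (H/2-1) * K2 H t s s' := by
  have hW := W_integrable (s := s) (s' := s') hH ht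
  calc ∫ x : ℝ, fker H t s x * fker H t s' x
      = ∫ x : ℝ, ∫ p : ℝ × ℝ, (pospow (p.1 - x) (H/2-1) * |p.1 - s| ^ (H-1))
          * (pospow (p.2 - x) (H/2-1) * |p.2 - s'| ^ (H-1))
        ∂((volume.restrict (Ioc (0:ℝ) t)).prod (volume.restrict (Ioc (0:ℝ) t))) := by
        congr 1; funext x; exact fker_mul_eq x
    _ = ∫ z : ℝ × ℝ × ℝ, (pospow (z.2.1 - z.1) (H/2-1) * |z.2.1 - s| ^ (H-1))
          * (pospow (z.2.2 - z.1) (H/2-1) * |z.2.2 - s'| ^ (H-1))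
        ∂((volume : Measure ℝ).prod
          ((volume.restrict (Ioc (0:ℝ) t)).prod (volume.restrict (Ioc (0:ℝ) t)))) :=
        (integral_prod _ hW).symm
    _ = ∫ p : ℝ × ℝ, (∫ x : ℝ, (pospow (p.1 - x) (H/2-1) * |p.1 - s| ^ (H-1))
          * (pospow (p.2 - x) (H/2-1) * |p.2 - s'| ^ (H-1)))
        ∂((volume.restrict (Ioc (0:ℝ) t)).prod (volume.restrict (Ioc (0:ℝ) t))) :=
        integral_prod_symm _ hW
    _ = ∫ p : ℝ × ℝ, Cint (H/2-1)
          * (|p.1 - s| ^ (H-1) * |p.1 - p.2| ^ (H-1) * |p.2 - s'| ^ (H-1))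
        ∂((volume.restrict (Ioc (0:ℝ) t)).prod (volume.restrict (Ioc (0:ℝ) t))) := by
        refine integral_congr_ae ?_
        filter_upwards [ae_offdiag t] with p hp
        exact inner_bochner hH hp
    _ = Cint (H/2-1) * K2 H t s s' := by
        rw [integral_const_mul, K2_eq hH ht]

lemma fker_mul_integrable (hH : H ∈ Set.Ioo (1/2:ℝ) 1) (ht : 0 < t) :
    Integrable (fun x : ℝ => fker H t s x * fker H t s' x) := by
  have hW := W_integrable (s := s) (s' := s') hH ht
  have := hW.integral_prod_left
  refine this.congr (ae_of_all _ fun x => ?_)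
  exact (fker_mul_eq x).symm

lemma Cint_val (hH : H ∈ Set.Ioo (1/2:ℝ) 1) :
    Cint (H/2-1) = eulerBeta (1-H) (H/2) := by
  rw [Cint_eq (by linarith [hH.2] : H/2-1 ≠ 0),
    show -(2*(H/2-1)+1) = 1-H by ring, show (H/2-1)+1 = H/2 by ring]

lemma memLp_eKer (hH : H ∈ Set.Ioo (1/2:ℝ) 1) (ht : 0 < t) :
    MemLp (eKer H t s) 2 (volume : Measure (ℝ × ℝ)) := by
  have hfe : eKer H t s = fun x : ℝ × ℝ => fker H t s x.1 * fker H t s x.2 :=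
    funext (eKer_eq H t s ht.le)
  rw [hfe]
  have hsm : AEStronglyMeasurable (fun x : ℝ × ℝ => fker H t s x.1 * fker H t s x.2)
      (volume : Measure (ℝ × ℝ)) :=
    (((fker_sm H t s).comp_measurable measurable_fst).mul
      ((fker_sm H t s).comp_measurable measurable_snd)).aestronglyMeasurable
  rw [memLp_two_iff_integrable_sq hsm]
  have hsq : Integrable (fun y : ℝ => fker H t s y ^ 2) := by
    have := fker_mul_integrable (s := s) (s' := s) hH ht
    refine this.congr (ae_of_all _ fun y => ?_)
    ring
  have heq : (fun x : ℝ × ℝ => (fker H t s x.1 * fker H t s x.2) ^ 2)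
      = fun x : ℝ × ℝ => (fun y => fker H t s y ^ 2) x.1 * (fun y => fker H t s y ^ 2) x.2 := by
    funext x; ring
  rw [heq, Measure.volume_eq_prod]
  exact hsq.mul_prod hsq

end Main

theorem eKer_inner_product (H : ℝ) (hH : H ∈ Set.Ioo (1/2 : ℝ) 1) (t : ℝ) (ht : 0 < t)
    (s s' : ℝ) (hs : s ∈ Set.Ici t) (hs' : s' ∈ Set.Ici t) :
    MemLp (eKer H t s) 2 (volume : Measure (ℝ × ℝ)) ∧
    MemLp (eKer H t s') 2 (volume : Measure (ℝ × ℝ)) ∧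
    ∫ x : ℝ × ℝ, eKer H t s x * eKer H t s' x
      = (eulerBeta (1 - H) (H/2)) ^ 2 * (K2 H t s s') ^ 2 := by
  refine ⟨memLp_eKer hH ht, memLp_eKer hH ht, ?_⟩
  have hcongr : (fun x : ℝ × ℝ => eKer H t s x * eKer H t s' x)
      = fun x : ℝ × ℝ => (fun y => fker H t s y * fker H t s' y) x.1
          * (fun y => fker H t s y * fker H t s' y) x.2 := by
    funext x
    rw [eKer_eq H t s ht.le, eKer_eq H t s' ht.le]
    ring
  have hiprod := integral_prod_mul (μ := (volume : Measure ℝ)) (ν := (volume : Measure ℝ))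
    (fun y => fker H t s y * fker H t s' y) (fun y => fker H t s y * fker H t s' y)
  rw [hcongr, Measure.volume_eq_prod, hiprod, main_inner hH ht, Cint_val hH]
  ring
end

section
/- Let H ∈ (1/2, 1). Then the integral J_H = ∫_{[0,1]^4} |r₁-r₂|^{H-1} |r₂-r₃|^{H-1} |r₃-r₄|^{H-1} |r₄-r₁|^{H-1} dr₁ dr₂ dr₃ dr₄ is finite, and for every t > 0 one has ∫_{[0,t]^4} |r₁-r₂|^{H-1} |r₂-r₃|^{H-1} |r₃-r₄|^{H-1} |r₄-r₁|^{H-1} dr₁ dr₂ dr₃ dr₄ = t^{4H} · J_H. -/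
open MeasureTheory Set intervalIntegral

-- 1D interval integrability
lemma aux_int1 {p : ℝ} (hp : -1 < p) {x : ℝ} (hx0 : 0 < x) (hx1 : x < 1) :
    IntervalIntegrable (fun y : ℝ => |x - y| ^ p) volume 0 1 := by
  have h1 : IntervalIntegrable (fun y : ℝ => |x - y| ^ p) volume 0 x := by
    have h := (intervalIntegral.intervalIntegrable_rpow' (a := 0) (b := x) hp).comp_sub_left x
    simp only [sub_zero, sub_self] at h
    have h' := h.symm
    refine h'.congr_ae ?_
    filter_upwards [ae_restrict_mem measurableSet_uIoc] with y hy
    rw [Set.uIoc_of_le (le_of_lt hx0)] at hy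
    rw [abs_of_nonneg (by linarith [hy.2] : (0:ℝ) ≤ x - y)]
  have h2 : IntervalIntegrable (fun y : ℝ => |x - y| ^ p) volume x 1 := by
    have h := (intervalIntegral.intervalIntegrable_rpow' (a := 0) (b := 1 - x) hp).comp_sub_right x
    simp only [zero_add, sub_add_cancel] at h
    refine h.congr_ae ?_
    filter_upwards [ae_restrict_mem measurableSet_uIoc] with y hy
    rw [Set.uIoc_of_le (le_of_lt hx1)] at hy
    rw [abs_sub_comm, abs_of_nonneg (by linarith [hy.1] : (0:ℝ) ≤ y - x)]
  exact h1.trans h2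

lemma aux_val1 {p : ℝ} (hp : -1 < p) {x : ℝ} (hx0 : 0 < x) (hx1 : x < 1) :
    ∫ y in Set.Ioo (0:ℝ) 1, |x - y| ^ p = (x ^ (p+1) + (1-x) ^ (p+1)) / (p+1) := by
  have h1 : IntervalIntegrable (fun y : ℝ => |x - y| ^ p) volume 0 x := by
    exact (aux_int1 hp hx0 hx1).mono_set (by rw [Set.uIcc_of_le hx0.le, Set.uIcc_of_le (by norm_num : (0:ℝ) ≤ 1)]; exact Set.Icc_subset_Icc le_rfl hx1.le)
  have h2 : IntervalIntegrable (fun y : ℝ => |x - y| ^ p) volume x 1 := by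
    exact (aux_int1 hp hx0 hx1).mono_set (by rw [Set.uIcc_of_le hx1.le, Set.uIcc_of_le (by norm_num : (0:ℝ) ≤ 1)]; exact Set.Icc_subset_Icc hx0.le le_rfl)
  have e0 : ∫ y in Set.Ioo (0:ℝ) 1, |x - y| ^ p = ∫ y in (0:ℝ)..1, |x - y| ^ p := by
    rw [intervalIntegral.integral_of_le (by norm_num : (0:ℝ) ≤ 1), ← MeasureTheory.integral_Ioc_eq_integral_Ioo]
  have esplit : ∫ y in (0:ℝ)..1, |x - y| ^ p = (∫ y in (0:ℝ)..x, |x - y| ^ p) + ∫ y in x..1, |x - y| ^ p :=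
    (intervalIntegral.integral_add_adjacent_intervals h1 h2).symm
  have ea : ∫ y in (0:ℝ)..x, |x - y| ^ p = x ^ (p+1) / (p+1) := by
    have : ∫ y in (0:ℝ)..x, |x - y| ^ p = ∫ y in (0:ℝ)..x, (x - y) ^ p := by
      apply intervalIntegral.integral_congr
      intro y hy
      rw [Set.uIcc_of_le hx0.le] at hy
      show |x - y| ^ p = _
      rw [abs_of_nonneg (by linarith [hy.2] : (0:ℝ) ≤ x - y)]
    rw [this, intervalIntegral.integral_comp_sub_left (fun u => u ^ p) x, sub_self, sub_zero,
      integral_rpow (Or.inl hp), Real.zero_rpow (by linarith : p + 1 ≠ 0), sub_zero]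
  have eb : ∫ y in x..1, |x - y| ^ p = (1-x) ^ (p+1) / (p+1) := by
    have : ∫ y in x..1, |x - y| ^ p = ∫ y in x..1, (y - x) ^ p := by
      apply intervalIntegral.integral_congr
      intro y hy
      rw [Set.uIcc_of_le hx1.le] at hy
      show |x - y| ^ p = _
      rw [abs_sub_comm, abs_of_nonneg (by linarith [hy.1] : (0:ℝ) ≤ y - x)]
    rw [this, intervalIntegral.integral_comp_sub_right (fun u => u ^ p) x, sub_self,
      integral_rpow (Or.inl hp), Real.zero_rpow (by linarith : p + 1 ≠ 0), sub_zero]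
  rw [e0, esplit, ea, eb, ← add_div]

lemma aux_meas2 (p : ℝ) : Measurable (fun q : ℝ × ℝ => |q.1 - q.2| ^ p) :=
  by fun_prop

lemma aux_int2 {p : ℝ} (hp : -1 < p) (hp0 : p < 0) :
    Integrable (fun q : ℝ × ℝ => |q.1 - q.2| ^ p)
      ((volume.restrict (Set.Ioo (0:ℝ) 1)).prod (volume.restrict (Set.Ioo (0:ℝ) 1))) := by
  set μ := volume.restrict (Set.Ioo (0:ℝ) 1) with hμ
  have hmeas : AEStronglyMeasurable (fun q : ℝ × ℝ => |q.1 - q.2| ^ p) (μ.prod μ) :=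
    (aux_meas2 p).aestronglyMeasurable
  rw [MeasureTheory.integrable_prod_iff hmeas]
  have hae : ∀ᵐ x ∂μ, x ∈ Set.Ioo (0:ℝ) 1 := ae_restrict_mem measurableSet_Ioo
  constructor
  · filter_upwards [hae] with x hx
    have := (aux_int1 hp hx.1 hx.2).mono_set
      (by rw [Set.uIcc_of_le (by norm_num : (0:ℝ) ≤ 1)] : Set.uIcc (0:ℝ) 1 ⊆ Set.uIcc (0:ℝ) 1)
    rw [intervalIntegrable_iff, Set.uIoc_of_le (by norm_num : (0:ℝ) ≤ 1)] at this
    exact this.mono_set Set.Ioo_subset_Ioc_self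
  · apply MeasureTheory.Integrable.mono' (integrable_const (2 / (p+1)))
    · exact hmeas.norm.integral_prod_right'
    · filter_upwards [hae] with x hx
      have hnn : 0 ≤ ∫ y, ‖|x - y| ^ p‖ ∂μ := integral_nonneg fun y => norm_nonneg _
      rw [Real.norm_of_nonneg hnn]
      have : (fun y => ‖|x - y| ^ p‖) = fun y => |x - y| ^ p := by
        funext y; exact Real.norm_of_nonneg (Real.rpow_nonneg (abs_nonneg _) _)
      rw [this, hμ]
      rw [aux_val1 hp hx.1 hx.2]
      have hp1 : 0 < p + 1 := by linarith
      have h1 : x ^ (p+1) ≤ 1 := Real.rpow_le_one hx.1.le hx.2.le hp1.le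
      have h2 : (1-x) ^ (p+1) ≤ 1 := Real.rpow_le_one (by linarith [hx.2]) (by linarith [hx.1]) hp1.le
      rw [div_le_div_iff₀ hp1 hp1]
      nlinarith

section FourD

noncomputable def μ01 : Measure ℝ := volume.restrict (Set.Ioo (0:ℝ) 1)

instance : IsFiniteMeasure μ01 := by unfold μ01; infer_instance

lemma aux_g1_int {p : ℝ} (hp : -1 < p) (hp0 : p < 0) :
    Integrable (fun r : ℝ × ℝ × ℝ × ℝ => |r.1 - r.2.1| ^ p * |r.2.2.1 - r.2.2.2| ^ p)
      (μ01.prod (μ01.prod (μ01.prod μ01))) := by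
  have h2 : Integrable (fun q : ℝ × ℝ => |q.1 - q.2| ^ p) (μ01.prod μ01) := aux_int2 hp hp0
  have hprod : Integrable
      (fun z : (ℝ × ℝ) × ℝ × ℝ => |z.1.1 - z.1.2| ^ p * |z.2.1 - z.2.2| ^ p)
      ((μ01.prod μ01).prod (μ01.prod μ01)) := h2.mul_prod h2
  have hmp := MeasureTheory.measurePreserving_prodAssoc μ01 μ01 (μ01.prod μ01)
  have hg1m : Measurable (fun r : ℝ × ℝ × ℝ × ℝ => |r.1 - r.2.1| ^ p * |r.2.2.1 - r.2.2.2| ^ p) := by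
    fun_prop
  exact (hmp.integrable_comp hg1m.aestronglyMeasurable).mp hprod

lemma aux_g2_int {p : ℝ} (hp : -1 < p) (hp0 : p < 0) :
    Integrable (fun r : ℝ × ℝ × ℝ × ℝ => |r.2.1 - r.2.2.1| ^ p * |r.2.2.2 - r.1| ^ p)
      (μ01.prod (μ01.prod (μ01.prod μ01))) := by
  have hg1 := aux_g1_int hp hp0
  have hg1m : Measurable (fun r : ℝ × ℝ × ℝ × ℝ => |r.1 - r.2.1| ^ p * |r.2.2.1 - r.2.2.2| ^ p) := by
    fun_prop
  have hswap : MeasurePreserving (Prod.swap : ℝ × (ℝ × ℝ × ℝ) → (ℝ × ℝ × ℝ) × ℝ)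
      (μ01.prod (μ01.prod (μ01.prod μ01))) ((μ01.prod (μ01.prod μ01)).prod μ01) :=
    MeasureTheory.Measure.measurePreserving_swap
  have ha1 := MeasureTheory.measurePreserving_prodAssoc μ01 (μ01.prod μ01) μ01
  have ha2 := (MeasurePreserving.id μ01).prod (MeasureTheory.measurePreserving_prodAssoc μ01 μ01 μ01)
  have hψ := (ha2.comp ha1).comp hswap
  exact (hψ.integrable_comp hg1m.aestronglyMeasurable).mpr hg1

lemma sq_rpow (x h : ℝ) : (|x| ^ h) ^ 2 = |x| ^ (2*h) := by
  rw [← Real.rpow_natCast (|x| ^ h) 2, ← Real.rpow_mul (abs_nonneg x)]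
  norm_num [mul_comm]

lemma aux_f_int {H : ℝ} (hH : H ∈ Set.Ioo (1/2 : ℝ) 1) :
    Integrable (fun r : ℝ × ℝ × ℝ × ℝ =>
        |r.1 - r.2.1| ^ (H - 1) * |r.2.1 - r.2.2.1| ^ (H - 1)
          * |r.2.2.1 - r.2.2.2| ^ (H - 1) * |r.2.2.2 - r.1| ^ (H - 1))
      (μ01.prod (μ01.prod (μ01.prod μ01))) := by
  obtain ⟨h1, h2⟩ := hH
  have hp : -1 < 2*(H-1) := by linarith
  have hp0 : 2*(H-1) < 0 := by linarith
  have hg1 := aux_g1_int hp hp0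
  have hg2 := aux_g2_int hp hp0
  have hfm : Measurable (fun r : ℝ × ℝ × ℝ × ℝ =>
      |r.1 - r.2.1| ^ (H - 1) * |r.2.1 - r.2.2.1| ^ (H - 1)
        * |r.2.2.1 - r.2.2.2| ^ (H - 1) * |r.2.2.2 - r.1| ^ (H - 1)) := by fun_prop
  refine ((hg1.add hg2).div_const 2).mono' hfm.aestronglyMeasurable ?_
  refine Filter.Eventually.of_forall fun r => ?_
  set A := |r.1 - r.2.1| ^ (H - 1) with hA
  set B := |r.2.1 - r.2.2.1| ^ (H - 1) with hB
  set C := |r.2.2.1 - r.2.2.2| ^ (H - 1) with hC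
  set D := |r.2.2.2 - r.1| ^ (H - 1) with hD
  have hAn : 0 ≤ A := Real.rpow_nonneg (abs_nonneg _) _
  have hBn : 0 ≤ B := Real.rpow_nonneg (abs_nonneg _) _
  have hCn : 0 ≤ C := Real.rpow_nonneg (abs_nonneg _) _
  have hDn : 0 ≤ D := Real.rpow_nonneg (abs_nonneg _) _
  rw [Real.norm_of_nonneg (by positivity)]
  have e1 : |r.1 - r.2.1| ^ (2*(H-1)) * |r.2.2.1 - r.2.2.2| ^ (2*(H-1)) = (A*C)^2 := by
    rw [mul_pow, hA, hC, sq_rpow, sq_rpow]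
  have e2 : |r.2.1 - r.2.2.1| ^ (2*(H-1)) * |r.2.2.2 - r.1| ^ (2*(H-1)) = (B*D)^2 := by
    rw [mul_pow, hB, hD, sq_rpow, sq_rpow]
  show A * B * C * D ≤ (|r.1 - r.2.1| ^ (2*(H-1)) * |r.2.2.1 - r.2.2.2| ^ (2*(H-1))
      + |r.2.1 - r.2.2.1| ^ (2*(H-1)) * |r.2.2.2 - r.1| ^ (2*(H-1))) / 2
  rw [e1, e2]
  nlinarith [sq_nonneg (A*C - B*D), mul_nonneg hAn hCn, mul_nonneg hBn hDn]

end FourD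

open Pointwise in
lemma smul_prod_set {α β : Type*} [SMul ℝ α] [SMul ℝ β] (c : ℝ) (s : Set α) (u : Set β) :
    c • (s ×ˢ u) = (c • s) ×ˢ (c • u) := by
  ext x
  constructor
  · rintro ⟨⟨a, b⟩, hab, rfl⟩
    exact ⟨⟨a, hab.1, rfl⟩, ⟨b, hab.2, rfl⟩⟩
  · rintro ⟨⟨a, ha, h1⟩, ⟨b, hb, h2⟩⟩
    exact ⟨(a, b), ⟨ha, hb⟩, Prod.ext h1 h2⟩

instance : (volume : Measure (ℝ × ℝ)).IsAddHaarMeasure := by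
  rw [Measure.volume_eq_prod]; exact Measure.prod.instIsAddHaarMeasure _ _
instance : (volume : Measure (ℝ × ℝ × ℝ)).IsAddHaarMeasure := by
  rw [Measure.volume_eq_prod]; exact Measure.prod.instIsAddHaarMeasure _ _
instance : (volume : Measure (ℝ × ℝ × ℝ × ℝ)).IsAddHaarMeasure := by
  rw [Measure.volume_eq_prod]; exact Measure.prod.instIsAddHaarMeasure _ _

open Pointwise

lemma measure_restrict_cube :
    (volume : Measure (ℝ × ℝ × ℝ × ℝ)).restrict
        (Set.Ioo (0:ℝ) 1 ×ˢ Set.Ioo (0:ℝ) 1 ×ˢ Set.Ioo (0:ℝ) 1 ×ˢ Set.Ioo (0:ℝ) 1)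
      = μ01.prod (μ01.prod (μ01.prod μ01)) := by
  unfold μ01
  rw [Measure.prod_restrict, Measure.prod_restrict, Measure.prod_restrict,
    ← Measure.volume_eq_prod, ← Measure.volume_eq_prod, ← Measure.volume_eq_prod]

theorem cyclic_four_kernel_integrable_and_scaling (H : ℝ) (hH : H ∈ Set.Ioo (1/2 : ℝ) 1) :
    IntegrableOn
      (fun r : ℝ × ℝ × ℝ × ℝ =>
        |r.1 - r.2.1| ^ (H - 1) * |r.2.1 - r.2.2.1| ^ (H - 1)
          * |r.2.2.1 - r.2.2.2| ^ (H - 1) * |r.2.2.2 - r.1| ^ (H - 1))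
      (Set.Ioo (0:ℝ) 1 ×ˢ Set.Ioo (0:ℝ) 1 ×ˢ Set.Ioo (0:ℝ) 1 ×ˢ Set.Ioo (0:ℝ) 1) volume ∧
    ∀ t : ℝ, 0 < t →
      ∫ r : ℝ × ℝ × ℝ × ℝ in
          Set.Ioo (0:ℝ) t ×ˢ Set.Ioo (0:ℝ) t ×ˢ Set.Ioo (0:ℝ) t ×ˢ Set.Ioo (0:ℝ) t,
          |r.1 - r.2.1| ^ (H - 1) * |r.2.1 - r.2.2.1| ^ (H - 1)
            * |r.2.2.1 - r.2.2.2| ^ (H - 1) * |r.2.2.2 - r.1| ^ (H - 1)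
        = t ^ (4 * H) *
          ∫ r : ℝ × ℝ × ℝ × ℝ in
            Set.Ioo (0:ℝ) 1 ×ˢ Set.Ioo (0:ℝ) 1 ×ˢ Set.Ioo (0:ℝ) 1 ×ˢ Set.Ioo (0:ℝ) 1,
            |r.1 - r.2.1| ^ (H - 1) * |r.2.1 - r.2.2.1| ^ (H - 1)
              * |r.2.2.1 - r.2.2.2| ^ (H - 1) * |r.2.2.2 - r.1| ^ (H - 1) := by
  set f : ℝ × ℝ × ℝ × ℝ → ℝ := fun r =>
    |r.1 - r.2.1| ^ (H - 1) * |r.2.1 - r.2.2.1| ^ (H - 1)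
      * |r.2.2.1 - r.2.2.2| ^ (H - 1) * |r.2.2.2 - r.1| ^ (H - 1) with hf
  constructor
  · rw [IntegrableOn, measure_restrict_cube]
    exact aux_f_int hH
  · intro t ht
    have hsm : t • (Set.Ioo (0:ℝ) 1 ×ˢ Set.Ioo (0:ℝ) 1 ×ˢ Set.Ioo (0:ℝ) 1 ×ˢ Set.Ioo (0:ℝ) 1)
        = Set.Ioo (0:ℝ) t ×ˢ Set.Ioo (0:ℝ) t ×ˢ Set.Ioo (0:ℝ) t ×ˢ Set.Ioo (0:ℝ) t := by
      rw [smul_prod_set, smul_prod_set, smul_prod_set, LinearOrderedField.smul_Ioo ht]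
      simp [smul_eq_mul]
    have hrank : Module.finrank ℝ (ℝ × ℝ × ℝ × ℝ) = 4 := by
      simp [Module.finrank_prod, Module.finrank_self]
    have hint := MeasureTheory.Measure.setIntegral_comp_smul_of_pos
      (volume : Measure (ℝ × ℝ × ℝ × ℝ)) f
      (Set.Ioo (0:ℝ) 1 ×ˢ Set.Ioo (0:ℝ) 1 ×ˢ Set.Ioo (0:ℝ) 1 ×ˢ Set.Ioo (0:ℝ) 1) ht
    rw [hsm, hrank] at hint
    have hkey : ∀ x : ℝ × ℝ × ℝ × ℝ, f (t • x) = t ^ (4*(H-1)) * f x := by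
      rintro ⟨a, b, c, d⟩
      have habs : ∀ u v : ℝ, |t * u - t * v| ^ (H-1) = t ^ (H-1) * |u - v| ^ (H-1) := by
        intro u v
        rw [← mul_sub, abs_mul, abs_of_pos ht, Real.mul_rpow ht.le (abs_nonneg _)]
      have hpow : t ^ (4*(H-1)) = (t ^ (H-1)) ^ (4:ℕ) := by
        rw [← Real.rpow_natCast (t ^ (H-1)) 4, ← Real.rpow_mul ht.le]
        norm_num [mul_comm]
      show |t * a - t * b| ^ (H-1) * |t * b - t * c| ^ (H-1)
          * |t * c - t * d| ^ (H-1) * |t * d - t * a| ^ (H-1) = _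
      rw [habs, habs, habs, habs, hpow, hf]
      ring
    have hleft : ∫ x in Set.Ioo (0:ℝ) 1 ×ˢ Set.Ioo (0:ℝ) 1 ×ˢ Set.Ioo (0:ℝ) 1 ×ˢ Set.Ioo (0:ℝ) 1,
        f (t • x) = t ^ (4*(H-1)) * ∫ x in
          Set.Ioo (0:ℝ) 1 ×ˢ Set.Ioo (0:ℝ) 1 ×ˢ Set.Ioo (0:ℝ) 1 ×ˢ Set.Ioo (0:ℝ) 1, f x := by
      simp_rw [hkey]
      exact MeasureTheory.integral_const_mul _ _
    rw [hleft] at hint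
    have h4 : (0:ℝ) < t ^ (4:ℕ) := by positivity
    have hexp : t ^ (4*H) = t ^ (4:ℕ) * t ^ (4*(H-1)) := by
      rw [← Real.rpow_natCast t 4, ← Real.rpow_add ht]
      norm_num
      congr 1
      ring
    rw [smul_eq_mul] at hint
    rw [hexp]
    field_simp at hint ⊢
    linarith [hint]
end
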